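/- arXiv:2106.02871 — 4 statements merged into one kernel-verified Lean document; each statement's English description precedes it below -/
import Mathlib

section
/- If a monotone path P1 in the diagram D from (i_1,1) to (m+i_2, n+1) and a monotone path P2 from (i_2,1) to (m+i_3, n+1) intersect at a common point, then there exists a monotone path from (i_2,1) to (m+i_2, n+1) whose points all lie on P1 ∪ P2. -/
/-- The diagram `D = {1,…,2m} × {1,…,n}`. -/
def Dgm (m n : ℕ) : Set (ℕ × ℕ) :=
  {p | 1 ≤ p.1 ∧ p.1 ≤ 2 * m ∧ 1 ≤ p.2 ∧ p.2 ≤ n}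

/-- The wrapped moves north, east and northeast on the diagram: `north (i,j) = (i,j+1)`
if `j < n` and `(i-m,1)` if `j = n`, `i > m`; `east (i,j) = (i+1,j)` if `i < 2m`;
`northeast (i,j) = (i+1,j+1)` if `i < 2m`, `j < n` and `(i-m+1,1)` if `i ≥ m`, `j = n`;
undefined otherwise. -/
def MoveW (m n : ℕ) (p q : ℕ × ℕ) : Prop :=
  (p.2 < n ∧ q = (p.1, p.2 + 1)) ∨ (p.2 = n ∧ m < p.1 ∧ q = (p.1 - m, 1)) ∨
  (p.1 < 2 * m ∧ q = (p.1 + 1, p.2)) ∨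
  (p.1 < 2 * m ∧ p.2 < n ∧ q = (p.1 + 1, p.2 + 1)) ∨
  (m ≤ p.1 ∧ p.2 = n ∧ q = (p.1 - m + 1, 1))

/-- One unwrapped monotone step: north, east or northeast. -/
def NStep (p q : ℕ × ℕ) : Prop :=
  q = (p.1, p.2 + 1) ∨ q = (p.1 + 1, p.2) ∨ q = (p.1 + 1, p.2 + 1)

/-- A monotone path on the diagram from `(a, 1)` to the virtual point `(m + b, n + 1)`
(which is identified with `(b, 1)`); only the final point may lie on the virtual row. -/
def MonoPath (m n a b : ℕ) (L : List (ℕ × ℕ)) : Prop :=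
  L.head? = some (a, 1) ∧ L.getLast? = some (m + b, n + 1) ∧
  List.Chain' NStep L ∧ ∀ p ∈ L.dropLast, p.2 ≤ n

/-- A forbidden set `F` is closed under the dead-end rule: any point of the diagram all of
whose (wrapped) successors are forbidden or undefined is itself forbidden. -/
def DeadEndClosed (m n : ℕ) (F : Set (ℕ × ℕ)) : Prop :=
  ∀ p ∈ Dgm m n, (∀ q, MoveW m n p q → q ∈ F) → p ∈ F

/-- Path splicing (step in the proof of Lemma 1): if a monotone path `P₁` from `(i₁,1)` to
`(m+i₂, n+1)` and a monotone path `P₂` from `(i₂,1)` to `(m+i₃, n+1)` share a common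
point, then there is a monotone path from `(i₂,1)` to `(m+i₂, n+1)` all of whose points
lie on `P₁ ∪ P₂`. -/
theorem monotone_paths_splice (m n : ℕ) (hm : 1 ≤ m) (hn : 1 ≤ n)
    (i₁ i₂ i₃ : ℕ) (h₁ : 1 ≤ i₁ ∧ i₁ ≤ m) (h₂ : 1 ≤ i₂ ∧ i₂ ≤ m) (h₃ : 1 ≤ i₃ ∧ i₃ ≤ m)
    (P₁ P₂ : List (ℕ × ℕ))
    (hP₁ : MonoPath m n i₁ i₂ P₁) (hP₂ : MonoPath m n i₂ i₃ P₂)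
    (q : ℕ × ℕ) (hq₁ : q ∈ P₁) (hq₂ : q ∈ P₂) :
    ∃ P, MonoPath m n i₂ i₂ P ∧ ∀ p ∈ P, p ∈ P₁ ∨ p ∈ P₂ := by

  obtain ⟨A₁, B₁, rfl⟩ := List.append_of_mem hq₁
  obtain ⟨A₂, B₂, rfl⟩ := List.append_of_mem hq₂
  obtain ⟨hh₁, hl₁, hc₁, hd₁⟩ := hP₁
  obtain ⟨hh₂, hl₂, hc₂, hd₂⟩ := hP₂
  refine ⟨A₂ ++ q :: B₁, ⟨?_, ?_, ?_, ?_⟩, ?_⟩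
  · rw [List.head?_append] at hh₂ ⊢
    cases A₂ <;> simp_all
  · rw [List.getLast?_append] at hl₁ ⊢
    cases B₁ <;> simp_all
  · rw [show List.Chain' = List.IsChain from rfl, List.isChain_append] at hc₁ hc₂ ⊢
    exact ⟨hc₂.1, hc₁.2.1, by simpa using hc₂.2.2⟩
  · intro p hp
    rw [List.dropLast_append_cons] at hp
    rcases List.mem_append.1 hp with h | h
    · exact hd₂ p (by rw [List.dropLast_append_cons]; exact List.mem_append_left _ h)
    · exact hd₁ p (by rw [List.dropLast_append_cons]; exact List.mem_append_right _ h)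
  · intro p hp
    rcases List.mem_append.1 hp with h | h
    · exact Or.inr (List.mem_append_left _ h)
    · exact Or.inl (List.mem_append_right _ h)
end

section
/- Suppose a permutation of the multiset A = {(d(i,j), i, j) : (i,j) ∈ D} is split into a prefix L and suffix R with every element of L ≥ every element of R (compared by first component). If after deleting (forbidding, with dead-end closure) exactly the points of L from the diagram, some allowed point remains, then the closed discrete Fréchet distance δ_dcF(U,V) equals d(i,j) for some (d,i,j) ∈ R. -/
/-- The maximum of `d` along a path (the final, virtual point is identified with the
starting point and hence excluded). -/
noncomputable def pathVal (d : ℕ × ℕ → ℝ) (L : List (ℕ × ℕ)) : ℝ :=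
  (L.dropLast.map d).foldr max 0

/-- The min-max over wrap-around monotone paths of `d`: the closed discrete Fréchet
distance in its path formulation. -/
noncomputable def dcFpath (m n : ℕ) (d : ℕ × ℕ → ℝ) : ℝ :=
  sInf {x | ∃ i, 1 ≤ i ∧ i ≤ m ∧ ∃ L, MonoPath m n i i L ∧ pathVal d L = x}

/-- The distance function on the doubled diagram:
`dd m u v (i, j) = dist (u i) (v j)` for `i ≤ m` and `dist (u (i - m)) (v j)` for `i > m`. -/
noncomputable def dd {M : Type*} [MetricSpace M] (m : ℕ) (u v : ℕ → M) : ℕ × ℕ → ℝ :=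
  fun p => if p.1 ≤ m then dist (u p.1) (v p.2) else dist (u (p.1 - m)) (v p.2)

/-- The list of all points of the diagram `{1,…,2m} × {1,…,n}`. -/
def gridList (m n : ℕ) : List (ℕ × ℕ) :=
  (List.range' 1 (2 * m)).flatMap fun i => (List.range' 1 n).map fun j => (i, j)

namespace L2Aux

def IsWrap (p q : ℕ × ℕ) : Prop := q.1 ≤ p.1 ∧ q.2 ≤ p.2

lemma move_class {m n : ℕ} (hm : 1 ≤ m) (hn : 1 ≤ n) {p q : ℕ × ℕ}
    (hp : p ∈ Dgm m n) (h : MoveW m n p q) :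
    q ∈ Dgm m n ∧
    ((¬ IsWrap p q ∧ NStep p q ∧ p.1 ≤ q.1 ∧ p.2 ≤ q.2 ∧ p.1 + p.2 + 1 ≤ q.1 + q.2) ∨
     (IsWrap p q ∧ q.2 = 1 ∧ p.2 = n ∧ (q.1 + m = p.1 ∨ q.1 + m = p.1 + 1) ∧
       NStep p (m + q.1, n + 1))) := by
  obtain ⟨h1, h2, h3, h4⟩ := hp
  simp only [Dgm, IsWrap, NStep, Set.mem_setOf_eq, Prod.mk.injEq, Prod.ext_iff]
  rcases h with ⟨hj, rfl⟩ | ⟨hj, hi, rfl⟩ | ⟨hi, rfl⟩ | ⟨hi, hj, rfl⟩ | ⟨hi, hj, rfl⟩ <;>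
    simp <;> omega

section Walk

variable {m n : ℕ} {nxt : ℕ × ℕ → ℕ × ℕ} {A : ℕ × ℕ → Prop}

/-- `walk nxt p t` -/
def walk (nxt : ℕ × ℕ → ℕ × ℕ) (p : ℕ × ℕ) (t : ℕ) : ℕ × ℕ := nxt^[t] p

@[simp] lemma walk_zero (p : ℕ × ℕ) : walk nxt p 0 = p := rfl

lemma walk_succ (p : ℕ × ℕ) (t : ℕ) : walk nxt p (t + 1) = nxt (walk nxt p t) := by
  simp [walk, Function.iterate_succ_apply']

lemma walk_add (p : ℕ × ℕ) (s t : ℕ) : walk nxt p (s + t) = walk nxt (walk nxt p s) t := by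
  simp [walk, Nat.add_comm s t, Function.iterate_add_apply]

variable (hm : 1 ≤ m) (hn : 1 ≤ n)
  (hstep : ∀ p, A p → MoveW m n p (nxt p) ∧ A (nxt p))
  (hAD : ∀ p, A p → p ∈ Dgm m n)

include hstep in
lemma walk_A {p : ℕ × ℕ} (hp : A p) (t : ℕ) : A (walk nxt p t) := by
  induction t with
  | zero => simpa using hp
  | succ k ih => rw [walk_succ]; exact (hstep _ ih).2

include hm hn hstep hAD in
lemma step_class {p : ℕ × ℕ} (hp : A p) (t : ℕ) :
    walk nxt p (t+1) ∈ Dgm m n ∧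
    ((¬ IsWrap (walk nxt p t) (walk nxt p (t+1)) ∧ NStep (walk nxt p t) (walk nxt p (t+1)) ∧
      (walk nxt p t).1 ≤ (walk nxt p (t+1)).1 ∧ (walk nxt p t).2 ≤ (walk nxt p (t+1)).2 ∧
      (walk nxt p t).1 + (walk nxt p t).2 + 1 ≤ (walk nxt p (t+1)).1 + (walk nxt p (t+1)).2) ∨
     (IsWrap (walk nxt p t) (walk nxt p (t+1)) ∧ (walk nxt p (t+1)).2 = 1 ∧
      (walk nxt p t).2 = n ∧
      ((walk nxt p (t+1)).1 + m = (walk nxt p t).1 ∨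
       (walk nxt p (t+1)).1 + m = (walk nxt p t).1 + 1) ∧
      NStep (walk nxt p t) (m + (walk nxt p (t+1)).1, n + 1))) := by
  have hA := walk_A hstep hp t
  rw [walk_succ]
  exact move_class hm hn (hAD _ hA) (hstep _ hA).1

include hm hn hstep hAD in
lemma exists_wrap {p : ℕ × ℕ} (hp : A p) :
    ∃ t, IsWrap (walk nxt p t) (walk nxt p (t+1)) := by
  by_contra hc
  push_neg at hc
  have key : ∀ t, p.1 + p.2 + t ≤ (walk nxt p t).1 + (walk nxt p t).2 := by
    intro t
    induction t with
    | zero => simp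
    | succ k ih =>
      rcases (step_class hm hn hstep hAD hp k).2 with ⟨_, _, _, _, hsum⟩ | ⟨hw, _⟩
      · omega
      · exact absurd hw (hc k)
  have hD := hAD _ (walk_A hstep hp (2*m+n))
  have hD0 := hAD _ hp
  obtain ⟨_, hb, _, hb2⟩ := hD
  obtain ⟨hc1, _, hc2, _⟩ := hD0
  have := key (2*m+n)
  omega

/-- `T` is the first wrap time of the walk from `p`. -/
def FirstWrap (nxt : ℕ × ℕ → ℕ × ℕ) (p : ℕ × ℕ) (T : ℕ) : Prop :=
  IsWrap (walk nxt p T) (walk nxt p (T+1)) ∧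
    ∀ s < T, ¬ IsWrap (walk nxt p s) (walk nxt p (s+1))

include hm hn hstep hAD in
lemma exists_firstWrap {p : ℕ × ℕ} (hp : A p) : ∃ T, FirstWrap nxt p T := by
  classical
  have hex : ∃ t, IsWrap (walk nxt p t) (walk nxt p (t+1)) := exists_wrap hm hn hstep hAD hp
  exact ⟨Nat.find hex, Nat.find_spec hex, fun s hs => Nat.find_min hex hs⟩

include hm hn hstep hAD in
lemma pre_step {p : ℕ × ℕ} (hp : A p) {T : ℕ} (hT : FirstWrap nxt p T) {s : ℕ} (hs : s < T) :
    NStep (walk nxt p s) (walk nxt p (s+1)) ∧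
    (walk nxt p s).1 ≤ (walk nxt p (s+1)).1 ∧
    (walk nxt p s).2 ≤ (walk nxt p (s+1)).2 ∧ (walk nxt p (s+1)).2 ≤ (walk nxt p s).2 + 1 ∧
    (walk nxt p (s+1)).1 ≤ (walk nxt p s).1 + 1 := by
  rcases (step_class hm hn hstep hAD hp s).2 with ⟨_, h2, h3, h4, _⟩ | ⟨hw, _⟩
  · refine ⟨h2, h3, h4, ?_, ?_⟩ <;>
    · rcases h2 with h | h | h <;> simp [h]
  · exact absurd hw (hT.2 s hs)

include hm hn hstep hAD in
lemma row_mono {p : ℕ × ℕ} (hp : A p) {T : ℕ} (hT : FirstWrap nxt p T) {s t : ℕ}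
    (hst : s ≤ t) (ht : t ≤ T) : (walk nxt p s).2 ≤ (walk nxt p t).2 ∧
      (walk nxt p s).1 ≤ (walk nxt p t).1 := by
  induction t with
  | zero => simp_all
  | succ k ih =>
    rcases Nat.eq_or_lt_of_le hst with rfl | hlt
    · exact ⟨le_refl _, le_refl _⟩
    · have hk := ih (by omega) (by omega)
      have := pre_step hm hn hstep hAD hp hT (show k < T by omega)
      exact ⟨le_trans hk.1 this.2.2.1, le_trans hk.2 this.2.1⟩

include hm hn hstep hAD in
lemma east_of_same_row {p : ℕ × ℕ} (hp : A p) {T : ℕ} (hT : FirstWrap nxt p T) {s : ℕ}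
    (hs : s < T) (hrow : (walk nxt p (s+1)).2 = (walk nxt p s).2) :
    (walk nxt p (s+1)).1 = (walk nxt p s).1 + 1 := by
  have h := (pre_step hm hn hstep hAD hp hT hs).1
  rcases h with h | h | h <;> rw [h] <;> simp_all

include hm hn hstep hAD in
lemma cover {p : ℕ × ℕ} (hp : A p) {T : ℕ} (hT : FirstWrap nxt p T) {j x s₀ : ℕ}
    (hs₀ : s₀ ≤ T) (hrow : (walk nxt p s₀).2 = j) (hx : x ≤ (walk nxt p s₀).1)
    (hlow0 : p.2 = j → p.1 ≤ x)
    (hlow : ∀ s, s < T → (walk nxt p s).2 + 1 = j → (walk nxt p s).1 < x) :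
    ∃ s ≤ T, walk nxt p s = (x, j) := by
  classical
  have hex : ∃ s, (walk nxt p s).2 = j := ⟨s₀, hrow⟩
  set s₁ := Nat.find hex with hs₁def
  have hrow₁ : (walk nxt p s₁).2 = j := Nat.find_spec hex
  have hs₁le : s₁ ≤ s₀ := Nat.find_min' hex hrow
  -- entry column is at most x
  have hcol₁ : (walk nxt p s₁).1 ≤ x := by
    rcases Nat.eq_zero_or_pos s₁ with h0 | hpos
    · rw [h0]; exact hlow0 (by rw [h0] at hrow₁; simpa using hrow₁)
    · obtain ⟨u, hu⟩ : ∃ u, s₁ = u + 1 := ⟨s₁ - 1, by omega⟩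
      have hune : (walk nxt p u).2 ≠ j := Nat.find_min hex (by omega)
      have huT : u < T := by omega
      have hps := pre_step hm hn hstep hAD hp hT huT
      rw [hu] at hrow₁ ⊢
      have hj : (walk nxt p u).2 + 1 = j := by omega
      have := hlow u huT hj
      omega
  -- columns advance by one within the row
  have key : ∀ k, s₁ + k ≤ s₀ →
      (walk nxt p (s₁ + k)).2 = j ∧ (walk nxt p (s₁ + k)).1 = (walk nxt p s₁).1 + k := by
    intro k
    induction k with
    | zero => intro _; exact ⟨by simpa using hrow₁, by simp⟩
    | succ k ih =>
      intro hk
      have hk' : s₁ + k ≤ s₀ := by omega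
      obtain ⟨ihr, ihc⟩ := ih hk'
      have h1 : (walk nxt p (s₁ + k)).2 ≤ (walk nxt p (s₁ + k + 1)).2 :=
        (pre_step hm hn hstep hAD hp hT (show s₁ + k < T by omega)).2.2.1
      have h2 : (walk nxt p (s₁ + k + 1)).2 ≤ (walk nxt p s₀).2 :=
        (row_mono hm hn hstep hAD hp hT (show s₁ + k + 1 ≤ s₀ by omega) hs₀).1
      have hrowk : (walk nxt p (s₁ + k + 1)).2 = j := by omega
      have he := east_of_same_row hm hn hstep hAD hp hT (show s₁ + k < T by omega)
        (by omega)
      constructor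
      · show (walk nxt p (s₁ + (k+1))).2 = j
        rw [show s₁ + (k+1) = s₁ + k + 1 by omega]; exact hrowk
      · show (walk nxt p (s₁ + (k+1))).1 = _
        rw [show s₁ + (k+1) = s₁ + k + 1 by omega]; omega
  have hc₀ := key (s₀ - s₁) (by omega)
  rw [show s₁ + (s₀ - s₁) = s₀ by omega] at hc₀
  refine ⟨s₁ + (x - (walk nxt p s₁).1), by omega, ?_⟩
  obtain ⟨hr, hc⟩ := key (x - (walk nxt p s₁).1) (by omega)
  refine Prod.ext_iff.mpr ⟨?_, ?_⟩
  · show (walk nxt p _).1 = x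
    omega
  · show (walk nxt p _).2 = j
    exact hr

omit hm hn hstep hAD in
lemma walk_eq_of_shared {p q : ℕ × ℕ} (hs : ℕ) (ht : ℕ)
    (hsh : walk nxt p hs = walk nxt q ht) : ∀ k, walk nxt p (hs + k) = walk nxt q (ht + k) := by
  intro k
  induction k with
  | zero => simpa using hsh
  | succ k ih =>
    rw [show hs + (k+1) = (hs + k) + 1 by omega, show ht + (k+1) = (ht + k) + 1 by omega,
      walk_succ, walk_succ, ih]

include hm hn hstep hAD in
lemma invariant {c c' : ℕ} (hc : A (c, 1)) (hc' : A (c', 1)) (hcc : c ≤ c')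
    {T T' : ℕ} (hT : FirstWrap nxt (c, 1) T) (hT' : FirstWrap nxt (c', 1) T') :
    ∀ t ≤ T', (∃ s ≤ T, walk nxt (c, 1) s = walk nxt (c', 1) t) ∨
      (∀ s ≤ T, (walk nxt (c, 1) s).2 = (walk nxt (c', 1) t).2 →
        (walk nxt (c, 1) s).1 < (walk nxt (c', 1) t).1) := by
  intro t
  induction t with
  | zero =>
    intro _
    by_cases hcase : ∃ s ≤ T, (walk nxt (c, 1) s).2 = 1 ∧ c' ≤ (walk nxt (c, 1) s).1
    · obtain ⟨s₀, hs₀T, hr, hx⟩ := hcase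
      left
      have := cover hm hn hstep hAD hc hT hs₀T hr hx (fun _ => hcc)
        (fun s _ habs => by
          have h1 : 1 ≤ (walk nxt (c,1) s).2 := (hAD _ (walk_A hstep hc s)).2.2.1
          omega)
      simpa using this
    · right
      push_neg at hcase
      intro s hsT hr
      exact hcase s hsT (by simpa using hr)
  | succ t ih =>
    intro ht'
    have htT' : t < T' := by omega
    rcases ih (le_of_lt htT') with ⟨s, hsT, hsh⟩ | hright
    · by_cases hsT' : s = T
      · exfalso
        subst hsT'
        refine hT'.2 t htT' ?_
        have e1 : walk nxt (c', 1) (t+1) = walk nxt (c, 1) (s+1) := by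
          rw [walk_succ, walk_succ, hsh]
        rw [e1, ← hsh]
        exact hT.1
      · exact Or.inl ⟨s + 1, by omega, by rw [walk_succ, walk_succ, hsh]⟩
    · have hq := pre_step hm hn hstep hAD hc' hT' htT'
      have hqD : walk nxt (c', 1) t ∈ Dgm m n := hAD _ (walk_A hstep hc' t)
      have hcomp : ((walk nxt (c',1) (t+1)).2 = (walk nxt (c',1) t).2 ∧
          (walk nxt (c',1) (t+1)).1 = (walk nxt (c',1) t).1 + 1) ∨
          ((walk nxt (c',1) (t+1)).2 = (walk nxt (c',1) t).2 + 1 ∧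
          (walk nxt (c',1) t).1 ≤ (walk nxt (c',1) (t+1)).1) := by
        rcases hq.1 with h | h | h <;> rw [h] <;> simp <;> omega
      rcases hcomp with ⟨hr2, hr1⟩ | ⟨hr2, hr1⟩
      · -- east step
        right
        intro s hsT hr
        have := hright s hsT (by omega)
        omega
      · -- north or northeast step
        by_cases hcase : ∃ s ≤ T, (walk nxt (c, 1) s).2 = (walk nxt (c', 1) (t+1)).2 ∧
            (walk nxt (c', 1) (t+1)).1 ≤ (walk nxt (c, 1) s).1
        · obtain ⟨s₀, hs₀T, hrw, hx⟩ := hcase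
          left
          have hcov := cover hm hn hstep hAD hc hT hs₀T hrw hx
            (fun h1 => by
              have h2 : 1 ≤ (walk nxt (c', 1) t).2 := hqD.2.2.1
              have h1' : (1:ℕ) = (walk nxt (c', 1) (t+1)).2 := h1
              omega)
            (fun s hsTlt hrr => by
              have h2 := hright s (le_of_lt hsTlt) (by omega)
              omega)
          obtain ⟨s, hsle, heq⟩ := hcov
          exact ⟨s, hsle, heq⟩
        · right
          push_neg at hcase
          intro s hsT hr
          have := hcase s hsT (by omega)
          omega

include hm hn hstep hAD in
lemma land_mono {c c' : ℕ} (hc : A (c, 1)) (hc' : A (c', 1)) (hcc : c ≤ c')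
    {T T' : ℕ} (hT : FirstWrap nxt (c, 1) T) (hT' : FirstWrap nxt (c', 1) T') :
    (walk nxt (c, 1) (T+1)).1 ≤ (walk nxt (c', 1) (T'+1)).1 := by
  rcases (step_class hm hn hstep hAD hc T).2 with ⟨hnw, _⟩ | ⟨_, hl2, hl3, hl4, _⟩
  · exact absurd hT.1 hnw
  rcases (step_class hm hn hstep hAD hc' T').2 with ⟨hnw, _⟩ | ⟨_, hr2e, hr3, hr4, _⟩
  · exact absurd hT'.1 hnw
  rcases invariant hm hn hstep hAD hc hc' hcc hT hT' T' (le_refl _) with ⟨s, hsT, hsh⟩ | hright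
  · by_cases hsT' : s = T
    · subst hsT'
      have : walk nxt (c, 1) (s+1) = walk nxt (c', 1) (T'+1) := by
        rw [walk_succ, walk_succ, hsh]
      rw [this]
    · -- s < T : the wrap step of the right walk would be an early wrap of the left walk
      exfalso
      refine hT.2 s (by omega) ?_
      have e1 : walk nxt (c, 1) (s+1) = walk nxt (c', 1) (T'+1) := by
        rw [walk_succ, walk_succ, hsh]
      rw [e1, hsh]
      exact hT'.1
  · have := hright T (le_refl _) (by rw [hl3, hr3])
    omega

end Walk

section FixedPoint

variable {m n : ℕ} {nxt : ℕ × ℕ → ℕ × ℕ} {A : ℕ × ℕ → Prop}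

/-- The first wrap time (junk value if none exists). -/
noncomputable def wrapT (nxt : ℕ × ℕ → ℕ × ℕ) (p : ℕ × ℕ) : ℕ := by
  classical
  exact if h : ∃ t, IsWrap (walk nxt p t) (walk nxt p (t+1)) then Nat.find h else 0

/-- The landing column of the walk from `(c, 1)`. -/
noncomputable def landCol (nxt : ℕ × ℕ → ℕ × ℕ) (c : ℕ) : ℕ :=
  (walk nxt (c, 1) (wrapT nxt (c, 1) + 1)).1

variable (hm : 1 ≤ m) (hn : 1 ≤ n)
  (hstep : ∀ p, A p → MoveW m n p (nxt p) ∧ A (nxt p))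
  (hAD : ∀ p, A p → p ∈ Dgm m n)

include hm hn hstep hAD in
lemma wrapT_firstWrap {p : ℕ × ℕ} (hp : A p) : FirstWrap nxt p (wrapT nxt p) := by
  classical
  have hex : ∃ t, IsWrap (walk nxt p t) (walk nxt p (t+1)) := exists_wrap hm hn hstep hAD hp
  rw [wrapT, dif_pos hex]
  exact ⟨Nat.find_spec hex, fun s hs => Nat.find_min hex hs⟩

include hm hn hstep hAD in
lemma land_props {p : ℕ × ℕ} (hp : A p) {T : ℕ} (hT : FirstWrap nxt p T) :
    (walk nxt p (T+1)).2 = 1 ∧ 1 ≤ (walk nxt p (T+1)).1 ∧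
    (walk nxt p (T+1)).1 ≤ m + 1 ∧ A (walk nxt p (T+1)) := by
  have hsc := step_class hm hn hstep hAD hp T
  obtain ⟨hq1, hq2, _, _⟩ := hsc.1
  rcases hsc.2 with ⟨hnw, _⟩ | ⟨_, h2, h3, h4, _⟩
  · exact absurd hT.1 hnw
  have hD := hAD _ (walk_A hstep hp T)
  have hD2 := hD.2.1
  exact ⟨h2, hq1, by omega, walk_A hstep hp (T+1)⟩

include hm hn hstep hAD in
lemma landCol_A {c : ℕ} (hc : A (c, 1)) :
    A (landCol nxt c, 1) ∧ 1 ≤ landCol nxt c ∧ landCol nxt c ≤ m + 1 := by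
  have hT := wrapT_firstWrap hm hn hstep hAD hc
  obtain ⟨h1, h2, h3, h4⟩ := land_props hm hn hstep hAD hc hT
  refine ⟨?_, h2, h3⟩
  have : (landCol nxt c, 1) = walk nxt (c, 1) (wrapT nxt (c, 1) + 1) := by
    rw [landCol]
    exact Prod.ext_iff.mpr ⟨rfl, h1.symm⟩
  rw [this]
  exact h4

include hm hn hstep hAD in
lemma landCol_mono {c c' : ℕ} (hc : A (c, 1)) (hc' : A (c', 1)) (hcc : c ≤ c') :
    landCol nxt c ≤ landCol nxt c' :=
  land_mono hm hn hstep hAD hc hc' hcc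
    (wrapT_firstWrap hm hn hstep hAD hc) (wrapT_firstWrap hm hn hstep hAD hc')

include hm hn hstep hAD in
lemma exists_fixedCol {c₀ : ℕ} (h₀ : A (c₀, 1)) :
    ∃ c, A (c, 1) ∧ landCol nxt c = c := by
  set g : ℕ → ℕ := fun k => (landCol nxt)^[k] c₀ with hg
  have hgs : ∀ k, g (k+1) = landCol nxt (g k) := by
    intro k
    simp [hg, Function.iterate_succ_apply']
  have hA : ∀ k, A (g k, 1) := by
    intro k
    induction k with
    | zero => exact h₀
    | succ k ih => rw [hgs]; exact (landCol_A hm hn hstep hAD ih).1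
  have hb : ∀ k, 1 ≤ g k ∧ g k ≤ 2 * m := by
    intro k
    have := hAD _ (hA k)
    exact ⟨this.1, this.2.1⟩
  by_contra hno
  push_neg at hno
  have hne : ∀ k, g (k+1) ≠ g k := by
    intro k he
    exact hno (g k) (hA k) (by rw [← hgs, he])
  by_cases hup : g 0 ≤ g 1
  · have mono : ∀ k, g k ≤ g (k+1) := by
      intro k
      induction k with
      | zero => show g 0 ≤ g 1; exact hup
      | succ k ih =>
        have ih' : g k ≤ landCol nxt (g k) := by rw [← hgs]; exact ih
        have h2 := landCol_mono hm hn hstep hAD (hA k)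
          (landCol_A hm hn hstep hAD (hA k)).1 ih'
        rw [hgs (k+1), hgs k]
        exact h2
    have strict : ∀ k, g 0 + k ≤ g k := by
      intro k
      induction k with
      | zero => omega
      | succ k ih =>
        have := mono k
        have := hne k
        omega
    have := strict (2*m + 1)
    have := hb (2*m + 1)
    have := hb 0
    omega
  · have anti : ∀ k, g (k+1) ≤ g k := by
      intro k
      induction k with
      | zero => show g 1 ≤ g 0; omega
      | succ k ih =>
        have ih' : landCol nxt (g k) ≤ g k := by rw [← hgs]; exact ih
        have h2 := landCol_mono hm hn hstep hAD
          (landCol_A hm hn hstep hAD (hA k)).1 (hA k) ih'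
        rw [hgs (k+1), hgs k]
        exact h2
    have strict : ∀ k, g k + k ≤ g 0 := by
      intro k
      induction k with
      | zero => omega
      | succ k ih =>
        have := anti k
        have := hne k
        omega
    have := strict (2*m + 1)
    have := hb (2*m + 1)
    have := hb 0
    omega

end FixedPoint

section Path

variable {m n : ℕ} {nxt : ℕ × ℕ → ℕ × ℕ} {A : ℕ × ℕ → Prop}
variable (hm : 1 ≤ m) (hn : 1 ≤ n)
  (hstep : ∀ p, A p → MoveW m n p (nxt p) ∧ A (nxt p))
  (hAD : ∀ p, A p → p ∈ Dgm m n)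

/-- The path associated to the one-wrap walk segment. -/
def mkPath (m n : ℕ) (nxt : ℕ × ℕ → ℕ × ℕ) (p : ℕ × ℕ) (T : ℕ) : List (ℕ × ℕ) :=
  (List.range (T+1)).map (walk nxt p) ++ [(m + (walk nxt p (T+1)).1, n + 1)]

include hm hn hstep hAD in
lemma mkPath_monoPath {c T : ℕ} (hc : A (c, 1)) (hT : FirstWrap nxt (c, 1) T) :
    MonoPath m n c (walk nxt (c, 1) (T+1)).1 (mkPath m n nxt (c, 1) T) ∧
    (mkPath m n nxt (c, 1) T).dropLast = (List.range (T+1)).map (walk nxt (c, 1)) ∧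
    ∀ p ∈ (mkPath m n nxt (c, 1) T).dropLast, A p ∧ p ∈ Dgm m n ∧ c ≤ p.1 := by
  have hdrop : (mkPath m n nxt (c, 1) T).dropLast = (List.range (T+1)).map (walk nxt (c, 1)) :=
    List.dropLast_concat
  have hmem : ∀ p ∈ (mkPath m n nxt (c, 1) T).dropLast, A p ∧ p ∈ Dgm m n ∧ c ≤ p.1 := by
    rw [hdrop]
    intro p hp
    rw [List.mem_map] at hp
    obtain ⟨s, hs, rfl⟩ := hp
    rw [List.mem_range] at hs
    have hA := walk_A hstep hc s
    have hcle : c ≤ (walk nxt (c, 1) s).1 := by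
      have := (row_mono hm hn hstep hAD hc hT (Nat.zero_le s) (by omega)).2
      simpa using this
    exact ⟨hA, hAD _ hA, hcle⟩
  refine ⟨⟨?_, ?_, ?_, ?_⟩, hdrop, hmem⟩
  · -- head?
    rw [mkPath, List.range_succ_eq_map, List.map_cons, List.cons_append, List.head?_cons]
    rfl
  · exact List.getLast?_concat
  · -- Chain'
    rw [mkPath]
    refine List.isChain_append.mpr ?_
    refine ⟨?_, List.isChain_singleton _, ?_⟩
    · rw [List.isChain_map, List.isChain_range_succ]
      intro s hs
      exact (pre_step hm hn hstep hAD hc hT hs).1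
    · intro x hx y hy
      rw [List.range_succ, List.map_append] at hx
      simp only [List.map_cons, List.map_nil] at hx
      rw [List.getLast?_concat] at hx
      simp only [List.head?_cons, Option.mem_def, Option.some.injEq] at hx hy
      subst hx; subst hy
      rcases (step_class hm hn hstep hAD hc T).2 with ⟨hnw, _⟩ | ⟨_, _, _, _, h5⟩
      · exact absurd hT.1 hnw
      · exact h5
  · -- rows of dropLast
    rw [mkPath, List.dropLast_concat]
    intro p hp
    rw [List.mem_map] at hp
    obtain ⟨s, hs, rfl⟩ := hp
    exact (hAD _ (walk_A hstep hc s)).2.2.2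

end Path

section Lists

lemma foldr_max_nonneg (l : List ℝ) : 0 ≤ l.foldr max 0 := by
  induction l with
  | nil => simp
  | cons a l ih => simp only [List.foldr_cons]; exact le_trans ih (le_max_right _ _)

lemma foldr_max_eq (d : ℕ × ℕ → ℝ) (hd : ∀ p, 0 ≤ d p) :
    ∀ (l : List (ℕ × ℕ)), l ≠ [] →
      ∃ p ∈ l, (l.map d).foldr max 0 = d p ∧ ∀ q ∈ l, d q ≤ d p := by
  intro l
  induction l with
  | nil => intro h; exact absurd rfl h
  | cons a l ih =>
    intro _
    rcases List.eq_nil_or_concat l with rfl | hne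
    · refine ⟨a, by simp, ?_, ?_⟩
      · simp [hd a, max_eq_left]
      · intro q hq; simp at hq; subst hq; exact le_refl _
    · have hlne : l ≠ [] := by rcases hne with ⟨l', b, rfl⟩; simp
      obtain ⟨p, hp, hval, hmax⟩ := ih hlne
      by_cases hcmp : d a ≤ d p
      · refine ⟨p, by simp [hp], ?_, ?_⟩
        · simp only [List.map_cons, List.foldr_cons, hval]
          exact max_eq_right hcmp
        · intro q hq
          rcases List.mem_cons.mp hq with rfl | hq
          · exact hcmp
          · exact hmax q hq
      · refine ⟨a, by simp, ?_, ?_⟩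
        · simp only [List.map_cons, List.foldr_cons, hval]
          exact max_eq_left (le_of_not_ge hcmp)
        · intro q hq
          rcases List.mem_cons.mp hq with rfl | hq
          · exact le_refl _
          · exact le_trans (hmax q hq) (le_of_not_ge hcmp)

lemma monopath_mem_Dgm {m n a b : ℕ} {Lp : List (ℕ × ℕ)} (hL : MonoPath m n a b Lp)
    (ha : 1 ≤ a) (hab : b ≤ m) : ∀ p ∈ Lp.dropLast, p ∈ Dgm m n := by
  obtain ⟨hh, hl, hch, hrow⟩ := hL
  haveI : IsTrans (ℕ × ℕ) (fun p q : ℕ × ℕ => p.1 ≤ q.1 ∧ p.2 ≤ q.2) :=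
    ⟨fun x y z h1 h2 => ⟨le_trans h1.1 h2.1, le_trans h1.2 h2.2⟩⟩
  have hch2 : List.Chain' (fun p q : ℕ × ℕ => p.1 ≤ q.1 ∧ p.2 ≤ q.2) Lp := by
    refine List.IsChain.imp ?_ hch
    intro p q h
    rcases h with h | h | h <;> rw [h] <;> exact ⟨by simp, by simp⟩
  have hpw := List.isChain_iff_pairwise.mp hch2
  have hne : Lp ≠ [] := by intro h; rw [h] at hh; simp at hh
  have hlast : Lp.getLast hne = (m + b, n + 1) := by
    have := List.getLast?_eq_getLast hne
    rw [this] at hl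
    exact Option.some_injective _ hl
  have hsplit : Lp.dropLast ++ [(m + b, n + 1)] = Lp := by
    rw [← hlast]; exact List.dropLast_append_getLast hne
  have hpw2 := hpw
  rw [← hsplit] at hpw2
  have hlastrel := (List.pairwise_append.mp hpw2).2.2
  intro p hp
  have hp1 : p ∈ Lp := (List.dropLast_sublist Lp).mem hp
  have hhead : p = (a, 1) ∨ ((a : ℕ), (1 : ℕ)).1 ≤ p.1 ∧ ((a : ℕ), (1 : ℕ)).2 ≤ p.2 := by
    obtain ⟨x, l, rfl⟩ := List.exists_cons_of_ne_nil hne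
    have hx : x = (a, 1) := by simpa using hh
    subst hx
    rcases List.mem_cons.mp hp1 with rfl | hmem
    · exact Or.inl rfl
    · exact Or.inr (List.rel_of_pairwise_cons hpw hmem)
  have hrel := hlastrel p hp (m + b, n + 1) (by simp)
  have h2 : p.1 ≤ m + b ∧ p.2 ≤ n := ⟨hrel.1, hrow p hp⟩
  rcases hhead with rfl | ⟨h3, h4⟩
  · exact ⟨ha, by omega, by omega, by omega⟩
  · simp only at h3 h4
    exact ⟨by omega, by omega, by omega, by omega⟩

lemma monopath_dropLast_ne_nil {m n a b : ℕ} (hn : 1 ≤ n) {Lp : List (ℕ × ℕ)}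
    (hL : MonoPath m n a b Lp) : Lp.dropLast ≠ [] := by
  obtain ⟨hh, hl, _, _⟩ := hL
  match Lp with
  | [] => simp at hh
  | [x] =>
    simp at hh hl
    rw [hh] at hl
    have := congrArg Prod.snd hl
    simp at this
    omega
  | x :: y :: l => simp

lemma chain_shift {m : ℕ} : ∀ (l : List (ℕ × ℕ)), List.Chain' NStep l →
    (∀ p ∈ l, m ≤ p.1) → List.Chain' NStep (l.map fun p => (p.1 - m, p.2))
  | [] , _, _ => List.isChain_nil
  | [a], _, _ => by exact List.isChain_singleton _
  | a :: b :: l, h, hmem => by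
    rw [List.map_cons, List.map_cons]
    replace h := List.isChain_cons_cons.mp h
    have hrec := chain_shift (b :: l) h.2 (fun p hp => hmem p (List.mem_cons_of_mem _ hp))
    rw [List.map_cons] at hrec
    refine List.isChain_cons_cons.mpr ⟨?_, hrec⟩
    have ha := hmem a (by simp)
    rcases h.1 with hst | hst | hst <;> subst hst <;> simp [NStep, Prod.ext_iff] <;> try omega

lemma mem_gridList {m n : ℕ} {p : ℕ × ℕ} : p ∈ gridList m n ↔ p ∈ Dgm m n := by
  rw [gridList]
  simp only [List.mem_flatMap, List.mem_map, List.mem_range'_1, Dgm, Set.mem_setOf_eq]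
  constructor
  · rintro ⟨i, ⟨hi1, hi2⟩, j, ⟨hj1, hj2⟩, rfl⟩
    exact ⟨hi1, by omega, hj1, by omega⟩
  · rintro ⟨h1, h2, h3, h4⟩
    exact ⟨p.1, ⟨h1, by omega⟩, p.2, ⟨h3, by omega⟩, rfl⟩

lemma dgm_finite (m n : ℕ) : (Dgm m n).Finite := by
  refine Set.Finite.subset (Set.Finite.prod (Set.finite_Iic (2*m)) (Set.finite_Iic n)) ?_
  rintro ⟨i, j⟩ ⟨h1, h2, h3, h4⟩
  exact ⟨h2, h4⟩

end Lists

end L2Aux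

/-- Statement 1 of Lemma 2: split a permutation of the multiset
`A = {(d(i,j), i, j) : (i,j) ∈ D}` into a prefix `L` and a suffix `R` with every element
of `L` at least every element of `R`. If deleting exactly the points of `L` (together with
the dead-end closure) leaves some allowed point, then the closed discrete Fréchet distance
is the first component of some element of `R`. -/
theorem lemma2_statement1 {M : Type*} [MetricSpace M]
    (m n : ℕ) (hm : 1 ≤ m) (hn : 1 ≤ n) (u v : ℕ → M)
    (L R : List (ℝ × ℕ × ℕ))
    (hperm : (L ++ R).Perm ((gridList m n).map fun p => (dd m u v p, p.1, p.2)))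
    (hLR : ∀ a ∈ L, ∀ b ∈ R, b.1 ≤ a.1)
    (F : Set (ℕ × ℕ)) (hFD : F ⊆ Dgm m n)
    (hFL : ∀ e ∈ L, (e.2.1, e.2.2) ∈ F)
    (hFclosed : DeadEndClosed m n F)
    (hFmin : ∀ G, G ⊆ Dgm m n → (∀ e ∈ L, (e.2.1, e.2.2) ∈ G) →
      DeadEndClosed m n G → F ⊆ G)
    (hrem : F ≠ Dgm m n) :
    ∃ e ∈ R, dcFpath m n (dd m u v) = e.1 := by
  classical
  set d : ℕ × ℕ → ℝ := dd m u v with hd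
  have hd0 : ∀ p, 0 ≤ d p := by
    intro p
    rw [hd]
    simp only [dd]
    split <;> exact dist_nonneg
  set A : ℕ × ℕ → Prop := fun p => p ∈ Dgm m n ∧ p ∉ F with hA
  have hAD : ∀ p, A p → p ∈ Dgm m n := fun p hp => hp.1
  have hstep0 : ∀ p, ∃ q, A p → MoveW m n p q ∧ A q := by
    intro p
    by_cases hp : A p
    · by_cases hq : ∃ q, MoveW m n p q ∧ q ∉ F
      · obtain ⟨q, h1, h2⟩ := hq
        exact ⟨q, fun _ => ⟨h1, ⟨(L2Aux.move_class hm hn hp.1 h1).1, h2⟩⟩⟩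
      · push_neg at hq
        exact absurd (hFclosed p hp.1 (fun q hmv => hq q hmv)) hp.2
    · exact ⟨p, fun h => absurd h hp⟩
  choose nxt hnxt using hstep0
  have hstep : ∀ p, A p → MoveW m n p (nxt p) ∧ A (nxt p) := fun p hp => hnxt p hp
  -- starting point
  have hss : F ⊂ Dgm m n := hFD.ssubset_of_ne hrem
  obtain ⟨p₀, hp₀D, hp₀F⟩ := Set.exists_of_ssubset hss
  have hp₀ : A p₀ := ⟨hp₀D, hp₀F⟩
  have hT₀ := L2Aux.wrapT_firstWrap hm hn hstep hAD hp₀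
  have hland₀ := L2Aux.land_props hm hn hstep hAD hp₀ hT₀
  have hq₀ : A ((L2Aux.walk nxt p₀ (L2Aux.wrapT nxt p₀ + 1)).1, 1) := by
    have h4 := hland₀.2.2.2
    have h1 := hland₀.1
    rwa [show ((L2Aux.walk nxt p₀ (L2Aux.wrapT nxt p₀ + 1)).1, 1)
        = L2Aux.walk nxt p₀ (L2Aux.wrapT nxt p₀ + 1) from Prod.ext_iff.mpr ⟨rfl, h1.symm⟩]
  obtain ⟨c, hcA, hcfix⟩ := L2Aux.exists_fixedCol hm hn hstep hAD hq₀
  have hTc : L2Aux.FirstWrap nxt (c, 1) (L2Aux.wrapT nxt (c, 1)) :=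
    L2Aux.wrapT_firstWrap hm hn hstep hAD hcA
  set T := L2Aux.wrapT nxt (c, 1) with hTdef
  have hcol : (L2Aux.walk nxt (c, 1) (T + 1)).1 = c := hcfix
  have hcb := L2Aux.landCol_A hm hn hstep hAD hcA
  have hc1 : 1 ≤ c := by rw [← hcfix]; exact hcb.2.1
  have hcm : c ≤ m + 1 := by rw [← hcfix]; exact hcb.2.2
  obtain ⟨hMP, hdrop, hmem⟩ := L2Aux.mkPath_monoPath hm hn hstep hAD hcA hTc
  rw [hcol] at hMP
  set P := L2Aux.mkPath m n nxt (c, 1) T with hP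
  set xs := (List.range (T + 1)).map (L2Aux.walk nxt (c, 1)) with hxs
  have hxsne : xs ≠ [] := by rw [hxs]; simp
  obtain ⟨qs, hqsmem, hqsval, hqsmax⟩ := L2Aux.foldr_max_eq d hd0 xs hxsne
  have hqsA : A qs := (hmem qs (by rw [hdrop]; exact hqsmem)).1
  -- competitor path
  have hSP : ∃ i, 1 ≤ i ∧ i ≤ m ∧ ∃ Lp, MonoPath m n i i Lp ∧ pathVal d Lp = d qs := by
    by_cases hcase : c ≤ m
    · refine ⟨c, hc1, hcase, P, hMP, ?_⟩
      unfold pathVal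
      rw [hdrop]
      exact hqsval
    · have hceq : c = m + 1 := by omega
      have hmemP : ∀ p ∈ P, m ≤ p.1 := by
        intro p hp
        rw [hP] at hp
        simp only [L2Aux.mkPath] at hp
        rcases List.mem_append.mp hp with hp | hp
        · have := (hmem p (by rw [hdrop, hxs]; exact hp)).2.2
          omega
        · simp only [List.mem_singleton] at hp
          subst hp
          simp
      obtain ⟨hh, hl, hch, hrow⟩ := hMP
      refine ⟨1, le_refl 1, hm, P.map (fun p => (p.1 - m, p.2)), ⟨?_, ?_, ?_, ?_⟩, ?_⟩
      · rw [List.head?_map, hh]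
        simp [Prod.ext_iff]
        omega
      · rw [List.getLast?_map, hl]
        simp [Prod.ext_iff]
        omega
      · exact L2Aux.chain_shift P hch hmemP
      · intro p hp
        rw [← List.map_dropLast] at hp
        obtain ⟨q, hq, rfl⟩ := List.mem_map.mp hp
        exact hrow q hq
      · unfold pathVal
        rw [← List.map_dropLast, hdrop, List.map_map]
        have hcong : xs.map ((fun p : ℕ × ℕ => d p) ∘ (fun p : ℕ × ℕ => (p.1 - m, p.2)))
            = xs.map d := by
          refine List.map_congr_left ?_
          intro p hp
          have hb := (hmem p (by rw [hdrop]; exact hp)).2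
          obtain ⟨hba, hbb, _, _⟩ := hb.1
          have hb1 : m + 1 ≤ p.1 := by have := hb.2; omega
          show d (p.1 - m, p.2) = d p
          rw [hd]
          simp only [dd]
          rw [if_pos (by omega : (p.1 - m, p.2).1 ≤ m),
            if_neg (by omega : ¬ (p : ℕ × ℕ).1 ≤ m)]
        rw [hcong]
        exact hqsval
  obtain ⟨i, hi1, him, Q, hQmp, hQval⟩ := hSP
  set SP := {x | ∃ i, 1 ≤ i ∧ i ≤ m ∧ ∃ Lp, MonoPath m n i i Lp ∧ pathVal d Lp = x}
    with hSPdef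
  have hdc : dcFpath m n d = sInf SP := rfl
  have hbdd : BddBelow SP := by
    refine ⟨0, ?_⟩
    rintro x ⟨i, _, _, Lp, _, rfl⟩
    exact L2Aux.foldr_max_nonneg _
  have hmemSP : d qs ∈ SP := ⟨i, hi1, him, Q, hQmp, hQval⟩
  have hub : dcFpath m n d ≤ d qs := by rw [hdc]; exact csInf_le hbdd hmemSP
  have hsub : SP ⊆ d '' (Dgm m n) := by
    rintro x ⟨i, hi1', him', Lp, hLp, rfl⟩
    have hne := L2Aux.monopath_dropLast_ne_nil hn hLp
    obtain ⟨p, hp, hval, _⟩ := L2Aux.foldr_max_eq d hd0 _ hne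
    have hpD := L2Aux.monopath_mem_Dgm hLp hi1' him' p hp
    exact ⟨p, hpD, hval.symm⟩
  have hSPfin : SP.Finite := Set.Finite.subset ((L2Aux.dgm_finite m n).image d) hsub
  have hSPne : SP.Nonempty := ⟨d qs, hmemSP⟩
  have hinf : dcFpath m n d ∈ SP := by rw [hdc]; exact hSPne.csInf_mem hSPfin
  obtain ⟨p₁, hp₁D, hp₁val⟩ := hsub hinf
  have hmementry : ∀ p ∈ Dgm m n, (d p, p.1, p.2) ∈ L ∨ (d p, p.1, p.2) ∈ R := by
    intro p hp
    have h1 : (d p, p.1, p.2) ∈ (gridList m n).map (fun p => (dd m u v p, p.1, p.2)) :=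
      List.mem_map.mpr ⟨p, L2Aux.mem_gridList.mpr hp, rfl⟩
    exact List.mem_append.mp (hperm.mem_iff.mpr h1)
  have hqsR : (d qs, qs.1, qs.2) ∈ R := by
    rcases hmementry qs hqsA.1 with hL | hR
    · exact absurd (hFL _ hL) hqsA.2
    · exact hR
  rcases hmementry p₁ hp₁D with hL1 | hR1
  · refine ⟨(d qs, qs.1, qs.2), hqsR, ?_⟩
    have h1 : d qs ≤ d p₁ := hLR _ hL1 _ hqsR
    have heq : d p₁ = d qs := le_antisymm (by rw [hp₁val]; exact hub) h1
    show dcFpath m n d = d qs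
    rw [← hp₁val, heq]
  · exact ⟨(d p₁, p₁.1, p₁.2), hR1, hp₁val.symm⟩
end

section
/- Suppose a permutation of the multiset A = {(d(i,j), i, j) : (i,j) ∈ D} is split into a prefix L and suffix R with every element of L ≥ every element of R. If after deleting exactly the points of L (with dead-end closure) all points of D become forbidden, then the closed discrete Fréchet distance δ_dcF(U,V) equals d(i,j) for some (d,i,j) ∈ L. -/
section Lemma2Helpers

lemma l2_nstep_le {p q : ℕ × ℕ} (h : NStep p q) : p.1 ≤ q.1 ∧ p.2 ≤ q.2 := by
  rcases h with rfl | rfl | rfl <;> simp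

lemma l2_foldr_le (l : List ℝ) : ∀ x ∈ l, x ≤ l.foldr max 0 := by
  induction l with
  | nil => simp
  | cons a l ih =>
    intro x hx
    rcases List.mem_cons.mp hx with rfl | h
    · exact le_max_left _ _
    · exact le_trans (ih x h) (le_max_right _ _)

lemma l2_foldr_mem (l : List ℝ) : l.foldr max 0 = 0 ∨ l.foldr max 0 ∈ l := by
  induction l with
  | nil => simp
  | cons a l ih =>
    rcases max_choice a (l.foldr max 0) with h | h
    · right; rw [List.foldr_cons, h]; exact List.mem_cons_self
    · rcases ih with h0 | hmm
      · left; rw [List.foldr_cons, h, h0]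
      · right; rw [List.foldr_cons, h]; exact List.mem_cons_of_mem _ hmm

lemma l2_chain_le_last : ∀ (l : List (ℕ × ℕ)), List.Chain' NStep l →
    ∀ t, l.getLast? = some t → ∀ p ∈ l, p.1 ≤ t.1 ∧ p.2 ≤ t.2 := by
  intro l
  induction l with
  | nil => simp
  | cons x xs ih =>
    intro hc t ht p hp
    cases xs with
    | nil =>
      simp only [List.getLast?_singleton, Option.some_inj] at ht
      simp only [List.mem_singleton] at hp
      subst ht; subst hp; exact ⟨le_refl _, le_refl _⟩
    | cons y ys =>
      have hstep : NStep x y := (List.isChain_cons_cons.mp hc).1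
      have hc2 : List.Chain' NStep (y :: ys) := (List.isChain_cons_cons.mp hc).2
      rw [List.getLast?_cons_cons] at ht
      rcases List.mem_cons.mp hp with rfl | h
      · have hy := ih hc2 t ht y (List.mem_cons_self)
        have hxy := l2_nstep_le hstep
        exact ⟨le_trans hxy.1 hy.1, le_trans hxy.2 hy.2⟩
      · exact ih hc2 t ht p h

lemma l2_chain_head_le : ∀ (l : List (ℕ × ℕ)), List.Chain' NStep l →
    ∀ h₀, l.head? = some h₀ → ∀ p ∈ l, h₀.1 ≤ p.1 ∧ h₀.2 ≤ p.2 := by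
  intro l
  induction l with
  | nil => simp
  | cons x xs ih =>
    intro hc h₀ hh p hp
    simp only [List.head?_cons, Option.some_inj] at hh
    subst hh
    rcases List.mem_cons.mp hp with rfl | h
    · exact ⟨le_refl _, le_refl _⟩
    · cases xs with
      | nil => simp at h
      | cons y ys =>
        have hstep := l2_nstep_le (List.isChain_cons_cons.mp hc).1
        have hrec := ih (List.isChain_cons_cons.mp hc).2 y rfl p h
        exact ⟨le_trans hstep.1 hrec.1, le_trans hstep.2 hrec.2⟩

lemma l2_exists_next : ∀ (l : List (ℕ × ℕ)), List.Chain' NStep l →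
    ∀ p ∈ l.dropLast, ∃ q ∈ l, NStep p q := by
  intro l
  induction l with
  | nil => simp
  | cons x xs ih =>
    intro hc p hp
    cases xs with
    | nil => simp at hp
    | cons y ys =>
      rw [List.dropLast_cons₂] at hp
      rcases List.mem_cons.mp hp with rfl | h
      · exact ⟨y, List.mem_cons_of_mem _ (List.mem_cons_self), (List.isChain_cons_cons.mp hc).1⟩
      · obtain ⟨q, hq, hs⟩ := ih (List.isChain_cons_cons.mp hc).2 p h
        exact ⟨q, List.mem_cons_of_mem _ hq, hs⟩

lemma l2_head_mem_dropLast {l : List (ℕ × ℕ)} {h t : ℕ × ℕ}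
    (hh : l.head? = some h) (hl : l.getLast? = some t) (hne : h ≠ t) : h ∈ l.dropLast := by
  cases l with
  | nil => simp at hh
  | cons x xs =>
    cases xs with
    | nil =>
      simp only [List.head?_cons, Option.some_inj] at hh
      simp only [List.getLast?_singleton, Option.some_inj] at hl
      exact absurd (hh.symm.trans hl) hne
    | cons y ys =>
      rw [List.dropLast_cons₂]
      simp only [List.head?_cons, Option.some_inj] at hh
      exact hh ▸ List.mem_cons_self

lemma l2_getLast?_range' : ∀ (k s : ℕ), (List.range' s (k + 1)).getLast? = some (s + k) := by
  intro k
  induction k with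
  | zero => intro s; simp [List.range'_succ]
  | succ k ih =>
    intro s
    rw [List.range'_succ, List.range'_succ, List.getLast?_cons_cons, ← List.range'_succ, ih]
    congr 1; omega

lemma l2_chain'_range' (r : ℕ → ℕ → Prop) (h : ∀ s, r s (s + 1)) :
    ∀ (k s : ℕ), List.Chain' r (List.range' s k) := by
  intro k
  induction k with
  | zero => exact fun _ => List.isChain_nil
  | succ k ih =>
    intro s
    rw [List.range'_succ]
    cases k with
    | zero => exact List.isChain_singleton _
    | succ k' =>
      rw [List.range'_succ]
      exact List.isChain_cons_cons.mpr ⟨h s, by rw [← List.range'_succ]; exact ih (s + 1)⟩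

lemma l2_mem_gridList (m n : ℕ) (p : ℕ × ℕ) : p ∈ gridList m n ↔ p ∈ Dgm m n := by
  simp only [gridList, List.mem_flatMap, List.mem_map, List.mem_range'_1, Dgm,
    Set.mem_setOf_eq]
  constructor
  · rintro ⟨i, hi, j, hj, rfl⟩
    exact ⟨hi.1, by omega, hj.1, by omega⟩
  · rintro ⟨h1, h2, h3, h4⟩
    exact ⟨p.1, ⟨h1, by omega⟩, p.2, ⟨h3, by omega⟩, rfl⟩

lemma l2_dropLast_mem_Dgm {m n a : ℕ} (ha1 : 1 ≤ a) (ham : a ≤ m) {P : List (ℕ × ℕ)}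
    (hP : MonoPath m n a a P) : ∀ p ∈ P.dropLast, p ∈ Dgm m n := by
  obtain ⟨hhead, hlast, hchain, hdrop⟩ := hP
  intro p hp
  have hpP : p ∈ P := (List.dropLast_sublist P).subset hp
  have hub := l2_chain_le_last P hchain _ hlast p hpP
  have hlb := l2_chain_head_le P hchain _ hhead p hpP
  simp only at hub hlb
  exact ⟨by omega, by omega, by omega, hdrop p hp⟩

lemma l2_exists_path (m n : ℕ) (hm : 1 ≤ m) (hn : 1 ≤ n) : ∃ P, MonoPath m n 1 1 P := by
  obtain ⟨n', rfl⟩ : ∃ n', n = n' + 1 := ⟨n - 1, by omega⟩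
  obtain ⟨m', rfl⟩ : ∃ m', m = m' + 1 := ⟨m - 1, by omega⟩
  refine ⟨((List.range' 1 (n' + 1)).map fun j => ((1 : ℕ), j)) ++
      (((List.range' 2 (m' + 1)).map fun i => (i, n' + 1)) ++ [(m' + 1 + 1, n' + 1 + 1)]),
      ?_, ?_, ?_, ?_⟩
  · rw [List.range'_succ]; rfl
  · rw [← List.append_assoc, List.getLast?_concat]
  · apply List.IsChain.append
    · rw [List.isChain_map]
      exact l2_chain'_range' _ (fun s => Or.inl rfl) _ _
    · apply List.IsChain.append
      · rw [List.isChain_map]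
        exact l2_chain'_range' _ (fun s => Or.inr (Or.inl rfl)) _ _
      · exact List.isChain_singleton _
      · intro x hx y hy
        rw [List.getLast?_map, l2_getLast?_range'] at hx
        simp only [Option.mem_def, Option.map_some, Option.some_inj] at hx
        simp only [List.head?_cons, Option.mem_def, Option.some_inj] at hy
        subst hx; subst hy
        left
        show (m' + 1 + 1, n' + 1 + 1) = (2 + m', n' + 1 + 1)
        congr 1
        omega
    · intro x hx y hy
      rw [List.getLast?_map, l2_getLast?_range'] at hx
      simp only [Option.mem_def, Option.map_some, Option.some_inj] at hx
      rw [List.range'_succ] at hy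
      simp only [List.map_cons, List.cons_append, List.head?_cons, Option.mem_def,
        Option.some_inj] at hy
      subst hx; subst hy
      right; left
      show (2, n' + 1) = (1 + 1, 1 + n')
      congr 1 <;> omega
  · intro p hp
    rw [← List.append_assoc, List.dropLast_concat] at hp
    rcases List.mem_append.mp hp with h | h
    · obtain ⟨j, hj, rfl⟩ := List.mem_map.mp h
      rw [List.mem_range'_1] at hj
      show j ≤ n' + 1
      omega
    · obtain ⟨j, hj, rfl⟩ := List.mem_map.mp h
      exact le_refl _

end Lemma2Helpers

/-- Statement 2 of Lemma 2: split a permutation of the multiset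
`A = {(d(i,j), i, j) : (i,j) ∈ D}` into a prefix `L` and a suffix `R` with every element
of `L` at least every element of `R`. If deleting exactly the points of `L` (together with
the dead-end closure) makes all points of `D` forbidden, then the closed discrete Fréchet
distance is the first component of some element of `L`. -/
theorem lemma2_statement2 {M : Type*} [MetricSpace M]
    (m n : ℕ) (hm : 1 ≤ m) (hn : 1 ≤ n) (u v : ℕ → M)
    (L R : List (ℝ × ℕ × ℕ))
    (hperm : (L ++ R).Perm ((gridList m n).map fun p => (dd m u v p, p.1, p.2)))
    (hLR : ∀ a ∈ L, ∀ b ∈ R, b.1 ≤ a.1)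
    (F : Set (ℕ × ℕ)) (hFD : F ⊆ Dgm m n)
    (hFL : ∀ e ∈ L, (e.2.1, e.2.2) ∈ F)
    (hFclosed : DeadEndClosed m n F)
    (hFmin : ∀ G, G ⊆ Dgm m n → (∀ e ∈ L, (e.2.1, e.2.2) ∈ G) →
      DeadEndClosed m n G → F ⊆ G)
    (hall : F = Dgm m n) :
    ∃ e ∈ L, dcFpath m n (dd m u v) = e.1 := by
  classical
  have hdc : dcFpath m n (dd m u v) =
      sInf {x | ∃ i, 1 ≤ i ∧ i ≤ m ∧ ∃ P, MonoPath m n i i P ∧ pathVal (dd m u v) P = x} := rfl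
  set S : Set ℝ :=
    {x | ∃ i, 1 ≤ i ∧ i ≤ m ∧ ∃ P, MonoPath m n i i P ∧ pathVal (dd m u v) P = x} with hSdef
  -- every element of L ++ R records the value of its grid point
  have hA1 : ∀ e ∈ L ++ R, e.1 = dd m u v e.2 ∧ e.2 ∈ Dgm m n := by
    intro e he
    rw [hperm.mem_iff, List.mem_map] at he
    obtain ⟨p, hp, rfl⟩ := he
    exact ⟨rfl, (l2_mem_gridList m n p).mp hp⟩
  have hA2 : ∀ p ∈ Dgm m n, (dd m u v p, p.1, p.2) ∈ L ++ R := by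
    intro p hp
    rw [hperm.mem_iff]
    exact List.mem_map_of_mem ((l2_mem_gridList m n p).mpr hp)
  -- key: every wrap-around monotone path passes through a point of L
  have key : ∀ a P, 1 ≤ a → a ≤ m → MonoPath m n a a P → ∃ e ∈ L, e.2 ∈ P.dropLast := by
    intro a P ha1 ham hP
    have hDgmP := l2_dropLast_mem_Dgm ha1 ham hP
    obtain ⟨hhead, hlast, hchain, hdrop⟩ := hP
    have hPne : P ≠ [] := by intro h; rw [h] at hhead; simp at hhead
    have hheadmem : (a, 1) ∈ P.dropLast := by
      refine l2_head_mem_dropLast hhead hlast ?_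
      intro h
      have h2 : (1 : ℕ) = n + 1 := congrArg Prod.snd h
      omega
    by_contra hcon
    push_neg at hcon
    set G : Set (ℕ × ℕ) := {p | p ∈ Dgm m n ∧ p ∉ P.dropLast} with hGdef
    have hGD : G ⊆ Dgm m n := fun p hp => hp.1
    have hGL : ∀ e ∈ L, (e.2.1, e.2.2) ∈ G := by
      intro e he
      have h1 := hA1 e (List.mem_append_left _ he)
      have heta : (e.2.1, e.2.2) = e.2 := rfl
      rw [heta]
      exact ⟨h1.2, hcon e he⟩
    have hGclosed : DeadEndClosed m n G := by
      intro p hpD hsucc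
      refine ⟨hpD, ?_⟩
      intro hpdrop
      obtain ⟨q, hqP, hstep⟩ := l2_exists_next P hchain p hpdrop
      have hp2 : p.2 ≤ n := hdrop p hpdrop
      have hqsplit : q ∈ P.dropLast ∨ q = (m + a, n + 1) := by
        have h1 := List.dropLast_append_getLast hPne
        have h2 : P.getLast hPne = (m + a, n + 1) := by
          have h3 := List.getLast?_eq_getLast hPne
          rw [h3] at hlast
          exact Option.some_inj.mp hlast
        rw [← h1] at hqP
        rcases List.mem_append.mp hqP with h | h
        · exact Or.inl h
        · simp only [List.mem_singleton] at h
          exact Or.inr (h.trans h2)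
      have hheadG : (a, 1) ∉ G := fun hg => hg.2 hheadmem
      rcases hqsplit with hq | hq
      · have hqD := hDgmP q hq
        obtain ⟨hq1, hq2, hq3, hq4⟩ := hqD
        have hmv : MoveW m n p q := by
          rcases hstep with rfl | rfl | rfl
        
          · exact Or.inl ⟨by simpa using hq4, rfl⟩
          · exact Or.inr (Or.inr (Or.inl ⟨by simpa using hq2, rfl⟩))
          · exact Or.inr (Or.inr (Or.inr (Or.inl ⟨by simpa using hq2, by simpa using hq4, rfl⟩)))
        exact (hsucc q hmv).2 hq
      · subst hq
        rcases hstep with heq | heq | heq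
        · -- north step into the virtual point: p = (m + a, n)
          have h1 : m + a = p.1 := congrArg Prod.fst heq
          have h2 : n + 1 = p.2 + 1 := congrArg Prod.snd heq
          have hmv : MoveW m n p (p.1 - m, 1) :=
            Or.inr (Or.inl ⟨by omega, by omega, rfl⟩)
          have := hsucc _ hmv
          rw [show (p.1 - m, 1) = (a, (1 : ℕ)) by rw [Prod.mk.injEq]; omega] at this
          exact hheadG this
        · -- east step into the virtual point: impossible
          have h2 : n + 1 = p.2 := congrArg Prod.snd heq
          omega
        · -- northeast step into the virtual point: p = (m + a - 1, n)
          have h1 : m + a = p.1 + 1 := congrArg Prod.fst heq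
          have h2 : n + 1 = p.2 + 1 := congrArg Prod.snd heq
          have hmv : MoveW m n p (p.1 - m + 1, 1) :=
            Or.inr (Or.inr (Or.inr (Or.inr ⟨by omega, by omega, rfl⟩)))
          have := hsucc _ hmv
          rw [show (p.1 - m + 1, 1) = (a, (1 : ℕ)) by rw [Prod.mk.injEq]; omega] at this
          exact hheadG this
    have hsub := hFmin G hGD hGL hGclosed
    rw [hall] at hsub
    have hmem : (a, 1) ∈ G := hsub ⟨ha1, by omega, le_refl 1, hn⟩
    exact hmem.2 hheadmem
  -- S is nonempty and finite, so its infimum is attained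
  have hSne : S.Nonempty := by
    obtain ⟨P₀, hP₀⟩ := l2_exists_path m n hm hn
    exact ⟨pathVal (dd m u v) P₀, 1, le_refl 1, hm, P₀, hP₀, rfl⟩
  have hSfin : S.Finite := by
    apply Set.Finite.subset
      (Set.Finite.insert 0 (List.finite_toSet ((gridList m n).map (dd m u v))))
    rintro x ⟨i, hi1, him, P, hP, rfl⟩
    rcases l2_foldr_mem (P.dropLast.map (dd m u v)) with h0 | hmem
    · exact Or.inl h0
    · right
      obtain ⟨p, hpdrop, hpv⟩ := List.mem_map.mp hmem
      have hpD := l2_dropLast_mem_Dgm hi1 him hP p hpdrop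
      show pathVal (dd m u v) P ∈ {y | y ∈ (gridList m n).map (dd m u v)}
      rw [show pathVal (dd m u v) P = dd m u v p from hpv.symm]
      exact List.mem_map_of_mem ((l2_mem_gridList m n p).mpr hpD)
  have hmemS : sInf S ∈ S := hSne.csInf_mem hSfin
  obtain ⟨a, ha1, ham, P, hP, hval⟩ := hmemS
  obtain ⟨e', he'L, he'drop⟩ := key a P ha1 ham hP
  have he'A := hA1 e' (List.mem_append_left _ he'L)
  have hle : e'.1 ≤ sInf S := by
    rw [← hval]
    calc e'.1 = dd m u v e'.2 := he'A.1
      _ ≤ pathVal (dd m u v) P := l2_foldr_le _ _ (List.mem_map_of_mem he'drop)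
  rcases l2_foldr_mem (P.dropLast.map (dd m u v)) with h0 | hmem
  · -- the optimal value is 0
    have hv0 : pathVal (dd m u v) P = 0 := h0
    refine ⟨e', he'L, ?_⟩
    rw [hdc]
    have hge : (0 : ℝ) ≤ e'.1 := by
      rw [he'A.1]
      unfold dd
      split_ifs <;> exact dist_nonneg
    have h1 : sInf S = 0 := hval ▸ hv0
    linarith
  · obtain ⟨p, hpdrop, hpv⟩ := List.mem_map.mp hmem
    have hpD := l2_dropLast_mem_Dgm ha1 ham hP p hpdrop
    have hPV : pathVal (dd m u v) P = dd m u v p := hpv.symm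
    rcases List.mem_append.mp (hA2 p hpD) with hL2 | hR2
    · refine ⟨(dd m u v p, p.1, p.2), hL2, ?_⟩
      rw [hdc, ← hval, hPV]
    · have h1 : dd m u v p ≤ e'.1 := hLR e' he'L _ hR2
      refine ⟨e', he'L, ?_⟩
      rw [hdc]
      have h2 : sInf S = dd m u v p := hval ▸ hPV
      linarith
end

section
/- The closed discrete Fréchet distance equals the min-max over wrap-around monotone paths: δ_dcF(U,V) = min over i* ∈ {1,...,m} and monotone paths P in D from (i*,1) to (m+i*, n+1) of max_{(i,j) ∈ P} d(i,j). -/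
def CouplingStep (p q : ℕ × ℕ) : Prop :=
  (q.1 = p.1 ∨ q.1 = p.1 + 1) ∧ (q.2 = p.2 ∨ q.2 = p.2 + 1) ∧ q ≠ p

def IsCoupling (m n : ℕ) (L : List (ℕ × ℕ)) : Prop :=
  L.head? = some (1, 1) ∧ L.getLast? = some (m, n) ∧ List.Chain' CouplingStep L

noncomputable def couplingLength (d : ℕ → ℕ → ℝ) (L : List (ℕ × ℕ)) : ℝ :=
  (L.map fun p => d p.1 p.2).foldr max 0

noncomputable def dF (m n : ℕ) (d : ℕ → ℕ → ℝ) : ℝ :=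
  sInf {x | ∃ L, IsCoupling m n L ∧ couplingLength d L = x}

def cshift {M : Type*} (m : ℕ) (u : ℕ → M) (s : ℕ) : ℕ → M :=
  fun i => if i + s ≤ m then u (i + s) else u (i + s - m)

/-- The closed discrete Fréchet distance: minimum over cyclic shifts of both sequences of
the open discrete Fréchet distance. -/
noncomputable def dcF {M : Type*} [MetricSpace M] (m n : ℕ) (u v : ℕ → M) : ℝ :=
  sInf {x | ∃ s < m, ∃ t < n,
    dF m n (fun i j => dist (cshift m u s i) (cshift n v t j)) = x}

namespace DFAux
open List


theorem chain'_append {α : Type*} {R : α → α → Prop} {l₁ l₂ : List α} :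
    Chain' R (l₁ ++ l₂) ↔ Chain' R l₁ ∧ Chain' R l₂ ∧
      ∀ x ∈ l₁.getLast?, ∀ y ∈ l₂.head?, R x y := isChain_append

theorem chain'_singleton {α : Type*} {R : α → α → Prop} (a : α) : Chain' R [a] :=
  isChain_singleton a

theorem chain'_map {α β : Type*} {R : α → α → Prop} (f : β → α) {l : List β} :
    Chain' R (map f l) ↔ Chain' (fun a b : β => R (f a) (f b)) l := isChain_map f

theorem chain'_cons' {α : Type*} {R : α → α → Prop} {x : α} {l : List α} :
    Chain' R (x :: l) ↔ (∀ y ∈ head? l, R x y) ∧ Chain' R l := isChain_cons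

theorem chain'_iff_pairwise {α : Type*} {R : α → α → Prop} [IsTrans α R] {l : List α} :
    Chain' R l ↔ Pairwise R l := isChain_iff_pairwise

lemma fm_nonneg (l : List ℝ) : 0 ≤ l.foldr max 0 := by
  induction l with
  | nil => simp
  | cons a l ih => simpa using Or.inr ih

lemma le_fm {l : List ℝ} {x : ℝ} (h : x ∈ l) : x ≤ l.foldr max 0 := by
  induction l with
  | nil => simp at h
  | cons a l ih =>
    rcases mem_cons.mp h with rfl | h
    · simp [le_max_iff]
    · simpa [le_max_iff] using Or.inr (ih h)

lemma fm_le {l : List ℝ} {b : ℝ} (hb : 0 ≤ b) (h : ∀ x ∈ l, x ≤ b) :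
    l.foldr max 0 ≤ b := by
  induction l with
  | nil => simpa
  | cons a l ih =>
    simp only [foldr_cons, max_le_iff]
    exact ⟨h a mem_cons_self, ih fun x hx => h x (mem_cons_of_mem _ hx)⟩

lemma fm_subset {l1 l2 : List ℝ} (h : ∀ x ∈ l1, x ∈ l2) :
    l1.foldr max 0 ≤ l2.foldr max 0 :=
  fm_le (fm_nonneg l2) fun x hx => le_fm (h x hx)

lemma step_iff (p q : ℕ × ℕ) : CouplingStep p q ↔ NStep p q := by
  simp only [CouplingStep, NStep, Prod.ext_iff, ne_eq, not_and]
  constructor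
  · rintro ⟨h1, h2, h3⟩
    by_cases e1 : q.1 = p.1 <;> by_cases e2 : q.2 = p.2 <;> omega
  · intro h
    rcases h with ⟨h1, h2⟩ | ⟨h1, h2⟩ | ⟨h1, h2⟩ <;> constructor <;> omega

def Mono (p q : ℕ × ℕ) : Prop := p.1 ≤ q.1 ∧ p.2 ≤ q.2

instance : IsTrans (ℕ × ℕ) Mono := ⟨fun _ _ _ h1 h2 => ⟨h1.1.trans h2.1, h1.2.trans h2.2⟩⟩

lemma nstep_mono {p q : ℕ × ℕ} (h : NStep p q) : Mono p q := by
  rcases h with h | h | h <;> subst h <;> exact ⟨by simp, by simp⟩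

lemma chain'_mono {l : List (ℕ × ℕ)} (h : Chain' NStep l) : Pairwise Mono l :=
  chain'_iff_pairwise.mp (h.imp fun _ _ => nstep_mono)

lemma chain'_of_mem {α : Type*} {R S : α → α → Prop} :
    ∀ {l : List α}, Chain' R l → (∀ a ∈ l, ∀ b ∈ l, R a b → S a b) → Chain' S l := by
  intro l
  induction l with
  | nil => exact fun _ _ => isChain_nil
  | cons a l ih =>
    intro h hm
    rw [chain'_cons'] at h ⊢
    refine ⟨fun y hy => hm _ mem_cons_self _ (mem_cons_of_mem _ (mem_of_mem_head? hy)) (h.1 y hy),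
      ih h.2 fun x hx y hy hr => hm _ (mem_cons_of_mem _ hx) _ (mem_cons_of_mem _ hy) hr⟩

lemma pairwise_head {α : Type*} {R : α → α → Prop} (hrefl : ∀ a, R a a) {l : List α}
    (h : Pairwise R l) {a : α} (ha : l.head? = some a) : ∀ p ∈ l, R a p := by
  cases l with
  | nil => simp at ha
  | cons x l =>
    simp only [head?_cons, Option.some.injEq] at ha
    subst ha
    intro p hp
    rcases mem_cons.mp hp with rfl | hp
    · exact hrefl p
    · exact (pairwise_cons.mp h).1 p hp

lemma pairwise_last {α : Type*} {R : α → α → Prop} (hrefl : ∀ a, R a a) :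
    ∀ {l : List α}, Pairwise R l → ∀ {z : α}, l.getLast? = some z → ∀ p ∈ l, R p z := by
  intro l
  induction l with
  | nil => simp
  | cons x l ih =>
    intro h z hz p hp
    cases l with
    | nil =>
      simp only [getLast?_singleton, Option.some.injEq] at hz
      simp only [mem_singleton] at hp
      subst hz; subst hp; exact hrefl _
    | cons y l' =>
      rw [getLast?_cons_cons] at hz
      have hz' : z ∈ (y :: l') := by
        obtain ⟨h1, h2⟩ := mem_getLast?_eq_getLast hz
        exact h2 ▸ getLast_mem h1
      rcases mem_cons.mp hp with rfl | hp
      · exact (pairwise_cons.mp h).1 z hz'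
      · exact ih (pairwise_cons.mp h).2 hz p hp


lemma coupling_facts {m n : ℕ} {L : List (ℕ × ℕ)} (h : IsCoupling m n L) :
    L ≠ [] ∧ List.Chain' NStep L ∧ List.Pairwise Mono L ∧
      (∀ p ∈ L, 1 ≤ p.1 ∧ 1 ≤ p.2 ∧ p.1 ≤ m ∧ p.2 ≤ n) := by
  obtain ⟨h1, h2, h3⟩ := h
  have hne : L ≠ [] := by
    intro hL; rw [hL] at h1; simp at h1
  have hns : List.Chain' NStep L := h3.imp fun a b hab => (step_iff a b).mp hab
  have hpw : List.Pairwise Mono L := chain'_mono hns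
  refine ⟨hne, hns, hpw, fun p hp => ?_⟩
  have hhd := pairwise_head (fun a => ⟨le_refl _, le_refl _⟩) hpw h1 p hp
  have hls := pairwise_last (fun a => ⟨le_refl _, le_refl _⟩) hpw h2 p hp
  exact ⟨hhd.1, hhd.2, hls.1, hls.2⟩

lemma mem_of_getLast?' {α : Type*} {l : List α} {z : α} (h : l.getLast? = some z) : z ∈ l := by
  obtain ⟨h1, h2⟩ := mem_getLast?_eq_getLast h
  exact h2 ▸ getLast_mem h1

lemma dist_congr {M : Type*} [MetricSpace M] (u v : ℕ → M) {a a' b b' : ℕ}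
    (h1 : a = a') (h2 : b = b') : dist (u a) (v b) = dist (u a') (v b') := by rw [h1, h2]

lemma snoc_coupling {L : List (ℕ × ℕ)} {x z w : ℕ × ℕ} (h1 : L.head? = some x)
    (h2 : L.getLast? = some z) (h3 : Chain' CouplingStep L) (h4 : CouplingStep z w) :
    (L ++ [w]).head? = some x ∧ (L ++ [w]).getLast? = some w ∧
      Chain' CouplingStep (L ++ [w]) := by
  have hne : L ≠ [] := by intro h; rw [h] at h2; simp at h2
  refine ⟨?_, getLast?_concat, ?_⟩
  · rw [head?_append, h1]; rfl
  · rw [chain'_append]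
    refine ⟨h3, chain'_singleton w, ?_⟩
    intro a ha b hb
    rw [h2] at ha
    simp only [head?_cons, Option.mem_def, Option.some.injEq] at ha hb
    rw [← ha, ← hb]; exact h4

lemma coupling_exists (m n : ℕ) (hm : 1 ≤ m) (hn : 1 ≤ n) : ∃ L, IsCoupling m n L := by
  have row : ∀ a : ℕ, ∃ L : List (ℕ × ℕ), L.head? = some (1, 1) ∧
      L.getLast? = some (1 + a, 1) ∧ Chain' CouplingStep L := by
    intro a
    induction a with
    | zero => exact ⟨[(1, 1)], rfl, rfl, chain'_singleton _⟩
    | succ a ih =>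
      obtain ⟨L, h1, h2, h3⟩ := ih
      refine ⟨L ++ [(1 + (a + 1), 1)], ?_⟩
      have := snoc_coupling h1 h2 h3 (z := (1 + a, 1)) (w := (1 + (a + 1), 1))
        ⟨Or.inr (by simp; omega), Or.inl rfl, by simp [Prod.ext_iff]⟩
      exact ⟨this.1, this.2.1, this.2.2⟩
  have col : ∀ b : ℕ, ∃ L : List (ℕ × ℕ), L.head? = some (1, 1) ∧
      L.getLast? = some (m, 1 + b) ∧ Chain' CouplingStep L := by
    intro b
    induction b with
    | zero =>
      obtain ⟨L, h1, h2, h3⟩ := row (m - 1)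
      exact ⟨L, h1, by rw [h2]; congr 2; omega, h3⟩
    | succ b ih =>
      obtain ⟨L, h1, h2, h3⟩ := ih
      refine ⟨L ++ [(m, 1 + (b + 1))], ?_⟩
      have := snoc_coupling h1 h2 h3 (z := (m, 1 + b)) (w := (m, 1 + (b + 1)))
        ⟨Or.inl rfl, Or.inr (by simp; omega), by simp [Prod.ext_iff]⟩
      exact ⟨this.1, this.2.1, this.2.2⟩
  obtain ⟨L, h1, h2, h3⟩ := col (n - 1)
  exact ⟨L, h1, by rw [h2]; congr 2; omega, h3⟩


lemma coupling_to_path {M : Type*} [MetricSpace M] (m n : ℕ) (hm : 1 ≤ m) (hn : 1 ≤ n)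
    (u v : ℕ → M) {s t : ℕ} (hs : s < m) (ht : t < n) {L : List (ℕ × ℕ)}
    (hL : IsCoupling m n L) :
    ∃ i, 1 ≤ i ∧ i ≤ m ∧ ∃ P, MonoPath m n i i P ∧
      pathVal (dd m u v) P ≤
        couplingLength (fun a b => dist (cshift m u s a) (cshift n v t b)) L := by
  obtain ⟨hhead, hlast, hchain⟩ := hL
  obtain ⟨hne, hns, hpw, hbnd⟩ := coupling_facts ⟨hhead, hlast, hchain⟩
  by_cases ht0 : t = 0
  · -- easy case : no column wrap
    subst ht0
    refine ⟨s + 1, by omega, by omega,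
      L.map (fun p => (p.1 + s, p.2)) ++ [(m + (s + 1), n + 1)], ⟨?_, ?_, ?_, ?_⟩, ?_⟩
    · rw [head?_append, head?_map, hhead]
      simp only [Option.map_some, Option.some_or, Option.some.injEq, Prod.mk.injEq, and_true, true_and]
      omega
    · exact getLast?_concat
    · rw [chain'_append]
      refine ⟨chain'_map _ |>.mpr (chain'_of_mem hns fun a _ b _ hab => ?_),
        chain'_singleton _, ?_⟩
      · simp only [NStep, Prod.ext_iff, and_true, true_and] at hab ⊢; omega
      · intro x hx y hy
        rw [getLast?_map, hlast] at hx
        simp only [head?_cons, Option.mem_def, Option.some.injEq, Option.map_some] at hx hy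
        subst hx; subst hy
        simp only [NStep, Prod.ext_iff, and_true, true_and]; omega
    · rw [dropLast_concat]
      intro p hp
      obtain ⟨q, hq, rfl⟩ := mem_map.mp hp
      exact (hbnd q hq).2.2.2
    · simp only [pathVal, couplingLength, dropLast_concat, map_map]
      apply fm_subset
      intro x hx
      obtain ⟨q, hq, rfl⟩ := mem_map.mp hx
      rw [mem_map]
      refine ⟨q, hq, ?_⟩
      have hb := hbnd q hq
      simp only [Function.comp, dd, cshift]
      split_ifs <;> exact (dist_congr u v (by omega) (by omega)).symm
  · -- wrapping case
    have ht1 : 1 ≤ t := by omega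
    set pb : ℕ × ℕ → Bool := fun p => decide (p.2 ≤ n - t) with hpb
    set L1 := L.takeWhile pb with hL1def
    set L2 := L.dropWhile pb with hL2def
    have hsplit : L1 ++ L2 = L := takeWhile_append_dropWhile
    have hsub1 : L1 <+ L := by rw [hL1def]; exact takeWhile_sublist pb
    have hsub2 : L2 <+ L := by rw [hL2def]; exact dropWhile_sublist pb
    have hL2ne : L2 ≠ [] := by
      intro h0
      have hQ : L1 = L := by rw [← hsplit, h0, append_nil]
      have hmem : (m, n) ∈ L1 := hQ ▸ mem_of_getLast?' hlast
      rw [hL1def] at hmem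
      have := mem_takeWhile_imp hmem
      simp only [hpb, decide_eq_true_eq] at this; omega
    have hL1ne : L1 ≠ [] := by
      intro h0
      have hQ : L2 = L := by rw [← hsplit, h0, nil_append]
      have h2 := head?_dropWhile_not pb L
      rw [← hL2def, hQ, hhead] at h2
      simp only [hpb, decide_eq_true_eq, decide_eq_false_iff_not] at h2; omega
    have hlast2 : L2.getLast? = some (m, n) := by
      rw [← hsplit, getLast?_append_of_ne_nil _ hL2ne] at hlast; exact hlast
    have hhead1 : L1.head? = some (1, 1) := by
      rw [← hsplit, head?_append, head?_eq_head hL1ne] at hhead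
      rw [head?_eq_head hL1ne]; simpa using hhead
    set hd2 := L2.head hL2ne with hhd2
    have hh2 : L2.head? = some hd2 := head?_eq_head hL2ne
    have hfail : ¬ (hd2.2 ≤ n - t) := by
      have h2 := head?_dropWhile_not pb L
      rw [← hL2def, hh2] at h2
      simpa [hpb] using h2
    set l1 := L1.getLast hL1ne with hl1
    have hlast1 : L1.getLast? = some l1 := getLast?_eq_getLast_of_ne_nil hL1ne
    have hl1mem : l1 ∈ L1 := mem_of_getLast?' hlast1
    have hl1pb : l1.2 ≤ n - t := by
      have hl1mem' : l1 ∈ takeWhile pb L := by rw [← hL1def]; exact hl1mem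
      have := mem_takeWhile_imp hl1mem'
      simpa [hpb] using this
    have hchain1 : Chain' NStep L1 := by
      rw [← hsplit, chain'_append] at hns; exact hns.1
    have hchain2 : Chain' NStep L2 := by
      rw [← hsplit, chain'_append] at hns; exact hns.2.1
    have hstep : NStep l1 hd2 := by
      rw [← hsplit, chain'_append] at hns
      exact hns.2.2 l1 hlast1 hd2 hh2
    have hd2L : hd2 ∈ L := hsub2.subset (mem_of_mem_head? hh2)
    have hd2bnd := hbnd hd2 hd2L
    have hl1bnd := hbnd l1 (hsub1.subset hl1mem)
    have h2col : hd2.2 = n - t + 1 ∧ l1.2 = n - t ∧ (hd2.1 = l1.1 ∨ hd2.1 = l1.1 + 1) := by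
      simp only [NStep, Prod.ext_iff] at hstep; omega
    have hpw2 : Pairwise Mono L2 := Pairwise.sublist hsub2 hpw
    have hpw1 : Pairwise Mono L1 := Pairwise.sublist hsub1 hpw
    have hL2mem : ∀ p ∈ L2, hd2.1 ≤ p.1 ∧ n - t + 1 ≤ p.2 := by
      intro p hp
      have := pairwise_head (fun a => ⟨le_refl _, le_refl _⟩) hpw2 hh2 p hp
      exact ⟨this.1, h2col.1 ▸ this.2⟩
    have hL1mem : ∀ p ∈ L1, p.1 ≤ l1.1 ∧ p.2 ≤ n - t := by
      intro p hp
      have := pairwise_last (fun a => ⟨le_refl _, le_refl _⟩) hpw1 hlast1 p hp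
      exact ⟨this.1, h2col.2.1 ▸ this.2⟩
    set k := if hd2.1 + s ≤ m then 0 else m with hkdef
    have hkcases : (k = 0 ∧ hd2.1 + s ≤ m) ∨ (k = m ∧ m < hd2.1 + s) := by
      by_cases h : hd2.1 + s ≤ m
      · left; simp [hkdef, h]
      · right; simp [hkdef, h]; omega
    set i := hd2.1 + s - k with hidef
    set φ2 : ℕ × ℕ → ℕ × ℕ := fun p => (p.1 + s - k, p.2 + t - n) with hφ2
    set φ1 : ℕ × ℕ → ℕ × ℕ := fun p => (p.1 + s + m - k, p.2 + t) with hφ1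
    refine ⟨i, by omega, by omega,
      L2.map φ2 ++ (L1.map φ1 ++ [(m + i, n + 1)]), ⟨?_, ?_, ?_, ?_⟩, ?_⟩
    · rw [head?_append, head?_map, hh2]
      simp only [hφ2, Option.map_some, Option.some_or, Option.some.injEq, Prod.mk.injEq, and_true, true_and]
      omega
    · rw [getLast?_append_of_ne_nil _ (by simp), getLast?_concat]
    · rw [chain'_append]
      refine ⟨chain'_map _ |>.mpr (chain'_of_mem hchain2 fun a ha b hb hab => ?_), ?_, ?_⟩
      · have hab2 := hL2mem a ha
        have hbb2 := hL2mem b hb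
        have ha' := hbnd a (hsub2.subset ha)
        have hb' := hbnd b (hsub2.subset hb)
        simp only [hφ2, NStep, Prod.ext_iff, and_true, true_and] at hab ⊢; omega
      · rw [chain'_append]
        refine ⟨chain'_map _ |>.mpr (chain'_of_mem hchain1 fun a ha b hb hab => ?_),
          chain'_singleton _, ?_⟩
        · have hab1 := hL1mem a ha
          have hbb1 := hL1mem b hb
          have ha' := hbnd a (hsub1.subset ha)
          have hb' := hbnd b (hsub1.subset hb)
          simp only [hφ1, NStep, Prod.ext_iff, and_true, true_and] at hab ⊢; omega
        · intro x hx y hy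
          rw [getLast?_map, hlast1] at hx
          simp only [head?_cons, Option.mem_def, Option.some.injEq, Option.map_some] at hx hy
          subst hx; subst hy
          simp only [hφ1, NStep, Prod.ext_iff, and_true, true_and]; omega
      · intro x hx y hy
        rw [getLast?_map, hlast2] at hx
        rw [head?_append, head?_map, hhead1] at hy
        simp only [Option.mem_def, Option.map_some, Option.some.injEq, Option.some_or] at hx hy
        subst hx; subst hy
        simp only [hφ2, hφ1, NStep, Prod.ext_iff, and_true, true_and]; omega
    · rw [← append_assoc, dropLast_concat]
      intro p hp
      rcases mem_append.mp hp with hp | hp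
      · obtain ⟨q, hq, rfl⟩ := mem_map.mp hp
        have := hbnd q (hsub2.subset hq)
        simp only [hφ2]; omega
      · obtain ⟨q, hq, rfl⟩ := mem_map.mp hp
        have := hL1mem q hq
        simp only [hφ1]; omega
    · simp only [pathVal, couplingLength, ← append_assoc, dropLast_concat, map_append, map_map]
      apply fm_subset
      intro x hx
      rcases mem_append.mp hx with hx | hx
      · obtain ⟨q, hq, rfl⟩ := mem_map.mp hx
        rw [mem_map]
        have hq2 := hL2mem q hq
        have hqL : q ∈ L := hsub2.subset hq
        have hb := hbnd q hqL
        refine ⟨q, hqL, ?_⟩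
        simp only [Function.comp, hφ2, dd, cshift]
        split_ifs <;> exact (dist_congr u v (by omega) (by omega)).symm
      · obtain ⟨q, hq, rfl⟩ := mem_map.mp hx
        rw [mem_map]
        have hq1 := hL1mem q hq
        have hqL : q ∈ L := hsub1.subset hq
        have hb := hbnd q hqL
        refine ⟨q, hqL, ?_⟩
        simp only [Function.comp, hφ1, dd, cshift]
        split_ifs <;> exact (dist_congr u v (by omega) (by omega)).symm


lemma path_to_coupling {M : Type*} [MetricSpace M] (m n : ℕ) (hm : 1 ≤ m) (hn : 1 ≤ n)
    (u v : ℕ → M) {i : ℕ} (hi1 : 1 ≤ i) (hi2 : i ≤ m) {P : List (ℕ × ℕ)}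
    (hP : MonoPath m n i i P) :
    ∃ s, s < m ∧ ∃ t, t < n ∧ ∃ C, IsCoupling m n C ∧
      couplingLength (fun a b => dist (cshift m u s a) (cshift n v t b)) C ≤
        pathVal (dd m u v) P := by
  obtain ⟨hhead, hlast, hchain, hcols⟩ := hP
  set Q := P.dropLast with hQdef
  have hPQ : Q ++ [(m + i, n + 1)] = P := dropLast_append_getLast? _ hlast
  have hQne : Q ≠ [] := by
    intro h0
    rw [← hPQ, h0, nil_append] at hhead
    simp only [head?_cons, Option.some.injEq, Prod.mk.injEq] at hhead
    omega
  have hchainQ : Chain' NStep Q := by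
    have hch := hchain; rw [← hPQ, chain'_append] at hch; exact hch.1
  have hstepend : NStep (Q.getLast hQne) (m + i, n + 1) := by
    have hch := hchain; rw [← hPQ, chain'_append] at hch
    exact hch.2.2 _ (getLast?_eq_getLast_of_ne_nil hQne) _ rfl
  have hheadQ : Q.head? = some (i, 1) := by
    rw [← hPQ, head?_append, head?_eq_head hQne] at hhead
    rw [head?_eq_head hQne]; simpa using hhead
  have hpwQ : Pairwise Mono Q := chain'_mono hchainQ
  have hcolsQ : ∀ p ∈ Q, p.2 ≤ n := hcols
  have hbndQ : ∀ p ∈ Q, i ≤ p.1 ∧ 1 ≤ p.2 := fun p hp =>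
    pairwise_head (fun a => ⟨le_refl _, le_refl _⟩) hpwQ hheadQ p hp
  set lq := Q.getLast hQne with hlqdef
  have hlastQ : Q.getLast? = some lq := getLast?_eq_getLast_of_ne_nil hQne
  have hlqQ : lq ∈ Q := mem_of_getLast?' hlastQ
  have hlqc : lq.2 = n ∧ (lq.1 = m + i ∨ lq.1 + 1 = m + i) := by
    have h1 := hcolsQ lq hlqQ
    simp only [NStep, Prod.ext_iff, and_true, true_and] at hstepend
    omega
  have hrowle : ∀ p ∈ Q, p.1 ≤ lq.1 := fun p hp =>
    (pairwise_last (fun a => ⟨le_refl _, le_refl _⟩) hpwQ hlastQ p hp).1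
  have hub : ∀ p ∈ Q, p.1 ≤ m + i := fun p hp => le_trans (hrowle p hp) (by omega)
  set qb : ℕ × ℕ → Bool := fun p => decide (p.1 < m + i) with hqb
  set Q1 := Q.takeWhile qb with hQ1def
  set Q2 := Q.dropWhile qb with hQ2def
  have hsplit : Q1 ++ Q2 = Q := takeWhile_append_dropWhile
  have hsubQ1 : Q1 <+ Q := by rw [hQ1def]; exact takeWhile_sublist qb
  have hsubQ2 : Q2 <+ Q := by rw [hQ2def]; exact dropWhile_sublist qb
  have hQ1ne : Q1 ≠ [] := by
    intro h0
    have hQ2Q : Q2 = Q := by rw [← hsplit, h0, nil_append]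
    have h2 := head?_dropWhile_not qb Q
    rw [← hQ2def, hQ2Q, hheadQ] at h2
    simp only [hqb, decide_eq_true_eq, decide_eq_false_iff_not] at h2
    omega
  have hheadQ1 : Q1.head? = some (i, 1) := by
    rw [← hsplit, head?_append, head?_eq_head hQ1ne] at hheadQ
    rw [head?_eq_head hQ1ne]; simpa using hheadQ
  set l1 := Q1.getLast hQ1ne with hl1def
  have hlastQ1 : Q1.getLast? = some l1 := getLast?_eq_getLast_of_ne_nil hQ1ne
  have hl1mem : l1 ∈ Q1 := mem_of_getLast?' hlastQ1
  have hl1qb : l1.1 < m + i := by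
    have h' : l1 ∈ takeWhile qb Q := by rw [← hQ1def]; exact hl1mem
    have := mem_takeWhile_imp h'
    simpa [hqb] using this
  have hchainQ1 : Chain' NStep Q1 := by
    have hch := hchainQ; rw [← hsplit, chain'_append] at hch; exact hch.1
  have hchQ2 : Chain' NStep Q2 := by
    have hch := hchainQ; rw [← hsplit, chain'_append] at hch; exact hch.2.1
  have hQ2all : ∀ p ∈ Q2, p.1 = m + i := by
    rcases eq_or_ne Q2 [] with h0 | h0
    · intro p hp; rw [h0] at hp; simp at hp
    · have hh2 : Q2.head? = some (Q2.head h0) := head?_eq_head h0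
      have hfail : ¬ ((Q2.head h0).1 < m + i) := by
        have h2 := head?_dropWhile_not qb Q
        rw [← hQ2def, hh2] at h2
        simpa [hqb] using h2
      have hpw2 : Pairwise Mono Q2 := Pairwise.sublist hsubQ2 hpwQ
      intro p hp
      have hge := (pairwise_head (fun a => ⟨le_refl _, le_refl _⟩) hpw2 hh2 p hp).1
      have := hub p (hsubQ2.subset hp)
      omega
  have hlastQ2 : Q2 ≠ [] → Q2.getLast? = some lq := by
    intro h0
    rw [← hsplit, getLast?_append_of_ne_nil _ h0] at hlastQ; exact hlastQ
  have hl1row : l1.1 + 1 = m + i := by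
    rcases eq_or_ne Q2 [] with h0 | h0
    · have hQ1Q : Q1 = Q := by rw [← hsplit, h0, append_nil]
      have h1 : some l1 = some lq := by rw [← hlastQ1, hQ1Q, hlastQ]
      simp only [Option.some.injEq] at h1
      rw [h1] at hl1qb ⊢
      omega
    · have hh2 : Q2.head? = some (Q2.head h0) := head?_eq_head h0
      have hstep : NStep l1 (Q2.head h0) := by
        have hch := hchainQ
        rw [← hsplit, chain'_append] at hch
        exact hch.2.2 _ hlastQ1 _ hh2
      have hr := hQ2all _ (mem_of_mem_head? hh2)
      simp only [NStep, Prod.ext_iff, and_true, true_and] at hstep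
      omega
  have hc0 : 1 ≤ l1.2 ∧ l1.2 ≤ n :=
    ⟨(hbndQ l1 (hsubQ1.subset hl1mem)).2, hcolsQ l1 (hsubQ1.subset hl1mem)⟩
  have hQ1bnd : ∀ p ∈ Q1, p.1 ≤ l1.1 ∧ p.2 ≤ l1.2 := fun p hp =>
    pairwise_last (fun a => ⟨le_refl _, le_refl _⟩) (Pairwise.sublist hsubQ1 hpwQ) hlastQ1 p hp
  set rb : ℕ × ℕ → Bool := fun p => decide (p.2 ≤ l1.2) with hrb
  set T := Q2.takeWhile rb with hTdef
  set R := Q2.dropWhile rb with hRdef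
  have hsplitR : T ++ R = Q2 := takeWhile_append_dropWhile
  have hsubR : R <+ Q2 := by rw [hRdef]; exact dropWhile_sublist rb
  have hsubT : T <+ Q2 := by rw [hTdef]; exact takeWhile_sublist rb
  have hchR : Chain' NStep R := by
    have hch := hchQ2; rw [← hsplitR, chain'_append] at hch; exact hch.2.1
  have hc0n : R = [] → l1.2 = n := by
    intro h0
    rcases eq_or_ne Q2 [] with h1 | h1
    · have hQ1Q : Q1 = Q := by rw [← hsplit, h1, append_nil]
      have h2 : some l1 = some lq := by rw [← hlastQ1, hQ1Q, hlastQ]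
      simp only [Option.some.injEq] at h2
      rw [h2]; exact hlqc.1
    · have hlqQ2 : lq ∈ Q2 := mem_of_getLast?' (hlastQ2 h1)
      have hlqT : lq ∈ takeWhile rb Q2 := by
        rw [← hTdef]
        rw [← hsplitR, h0, append_nil] at hlqQ2
        exact hlqQ2
      have := mem_takeWhile_imp hlqT
      simp only [hrb, decide_eq_true_eq] at this
      omega
  have hRhead : ∀ h0 : R ≠ [], (R.head h0).2 = l1.2 + 1 := by
    intro h0
    have hh : R.head? = some (R.head h0) := head?_eq_head h0
    have hfail : ¬ ((R.head h0).2 ≤ l1.2) := by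
      have h2 := head?_dropWhile_not rb Q2
      rw [← hRdef, hh] at h2
      simpa [hrb] using h2
    have hQ2ne : Q2 ≠ [] := by
      intro h1
      exact h0 (append_eq_nil_iff.mp (hsplitR.trans h1)).2
    rcases eq_or_ne T [] with h1 | h1
    · have hRQ2 : R = Q2 := by rw [← hsplitR, h1, nil_append]
      have hh2 : Q2.head? = some (Q2.head hQ2ne) := head?_eq_head hQ2ne
      have hstep : NStep l1 (Q2.head hQ2ne) := by
        have hch := hchainQ
        rw [← hsplit, chain'_append] at hch
        exact hch.2.2 _ hlastQ1 _ hh2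
      have heq : R.head h0 = Q2.head hQ2ne := by
        have : R.head? = Q2.head? := by rw [hRQ2]
        rw [hh, hh2] at this
        simpa using this
      rw [heq] at hfail ⊢
      simp only [NStep, Prod.ext_iff, and_true, true_and] at hstep
      omega
    · have hlt : T.getLast? = some (T.getLast h1) := getLast?_eq_getLast_of_ne_nil h1
      have hstep : NStep (T.getLast h1) (R.head h0) := by
        have hch := hchQ2
        rw [← hsplitR, chain'_append] at hch
        exact hch.2.2 _ hlt _ hh
      have hTmem : T.getLast h1 ∈ takeWhile rb Q2 := by
        rw [← hTdef]; exact mem_of_getLast?' hlt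
      have hTpred := mem_takeWhile_imp hTmem
      simp only [hrb, decide_eq_true_eq] at hTpred
      have hr1 := hQ2all _ (hsubT.subset (mem_of_getLast?' hlt))
      have hr2 := hQ2all _ (hsubR.subset (mem_of_mem_head? hh))
      simp only [NStep, Prod.ext_iff, and_true, true_and] at hstep
      omega
  have hlastR : ∀ h0 : R ≠ [], R.getLast? = some lq := by
    intro h0
    have hQ2ne : Q2 ≠ [] := by
      intro h1
      exact h0 (append_eq_nil_iff.mp (hsplitR.trans h1)).2
    have := hlastQ2 hQ2ne
    rw [← hsplitR, getLast?_append_of_ne_nil _ h0] at this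
    exact this
  have hRmem : ∀ p ∈ R, l1.2 + 1 ≤ p.2 ∧ p.1 = m + i ∧ p.2 ≤ n := by
    intro p hp
    rcases eq_or_ne R [] with h0 | h0
    · rw [h0] at hp; simp at hp
    · have hpwR : Pairwise Mono R := Pairwise.sublist (hsubR.trans hsubQ2) hpwQ
      have hge := (pairwise_head (fun a => ⟨le_refl _, le_refl _⟩) hpwR (head?_eq_head h0) p hp).2
      have h1 := hRhead h0
      exact ⟨by omega, hQ2all p (hsubR.subset hp), hcolsQ p (hsubQ2.subset (hsubR.subset hp))⟩
  have hcase : (l1.2 = n ∧ l1.2 % n = 0) ∨ (l1.2 < n ∧ l1.2 % n = l1.2) := by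
    rcases eq_or_lt_of_le hc0.2 with h1 | h1
    · left; exact ⟨h1, by rw [h1]; exact Nat.mod_self n⟩
    · right; exact ⟨h1, Nat.mod_eq_of_lt h1⟩
  have hRlt : R ≠ [] → l1.2 < n := by
    intro h0
    have := hRmem (R.head h0) (head_mem h0)
    have := hRhead h0
    omega
  set ψ2 : ℕ × ℕ → ℕ × ℕ := fun p => (1, p.2 - l1.2) with hψ2
  set ψ1 : ℕ × ℕ → ℕ × ℕ := fun p => (p.1 - (i - 1), p.2 + (n - l1.2)) with hψ1
  have hmapne : Q1.map ψ1 ≠ [] := by simpa using hQ1ne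
  refine ⟨i - 1, by omega, l1.2 % n, Nat.mod_lt _ (by omega), R.map ψ2 ++ Q1.map ψ1,
    ⟨?_, ?_, ?_⟩, ?_⟩
  · rcases eq_or_ne R [] with h0 | h0
    · rw [h0]
      simp only [map_nil, nil_append]
      rw [head?_map, hheadQ1]
      have := hc0n h0
      simp only [hψ1, Option.map_some, Option.some.injEq, Prod.mk.injEq, and_true, true_and]
      omega
    · rw [head?_append, head?_map, head?_eq_head h0]
      have h1 := hRhead h0
      simp only [hψ2, Option.map_some, Option.some_or, Option.some.injEq, Prod.mk.injEq, and_true, true_and]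
      omega
  · rw [getLast?_append_of_ne_nil _ hmapne, getLast?_map, hlastQ1]
    simp only [hψ1, Option.map_some, Option.some.injEq, Prod.mk.injEq, and_true, true_and]
    omega
  · rw [chain'_append]
    refine ⟨chain'_map _ |>.mpr (chain'_of_mem hchR fun a ha b hb hab => ?_),
      chain'_map _ |>.mpr (chain'_of_mem hchainQ1 fun a ha b hb hab => ?_), ?_⟩
    · have ha' := hRmem a ha
      have hb' := hRmem b hb
      rw [step_iff]
      simp only [hψ2, NStep, Prod.ext_iff, and_true, true_and] at hab ⊢
      omega
    · have ha' := hQ1bnd a ha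
      have hb' := hQ1bnd b hb
      have ha2 := hbndQ a (hsubQ1.subset ha)
      have hb2 := hbndQ b (hsubQ1.subset hb)
      rw [step_iff]
      simp only [hψ1, NStep, Prod.ext_iff, and_true, true_and] at hab ⊢
      omega
    · intro x hx y hy
      rw [getLast?_map] at hx
      rcases eq_or_ne R [] with h0 | h0
      · rw [h0] at hx; simp at hx
      · rw [hlastR h0] at hx
        rw [head?_map, hheadQ1] at hy
        simp only [Option.mem_def, Option.map_some, Option.some.injEq] at hx hy
        subst hx; subst hy
        have := hRlt h0
        rw [step_iff]
        simp only [hψ2, hψ1, NStep, Prod.ext_iff, and_true, true_and]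
        omega
  · simp only [couplingLength, pathVal, ← hQdef, map_append, map_map]
    apply fm_subset
    intro x hx
    rcases mem_append.mp hx with hx | hx
    · obtain ⟨q, hq, rfl⟩ := mem_map.mp hx
      rw [mem_map]
      have hq' := hRmem q hq
      refine ⟨q, hsubQ2.subset (hsubR.subset hq), ?_⟩
      have := hRlt (ne_nil_of_mem hq)
      simp only [Function.comp, hψ2, dd, cshift]
      split_ifs <;> exact dist_congr u v (by omega) (by omega)
    · obtain ⟨q, hq, rfl⟩ := mem_map.mp hx
      rw [mem_map]
      have hq1 := hQ1bnd q hq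
      have hq2 := hbndQ q (hsubQ1.subset hq)
      have hq3 := hcolsQ q (hsubQ1.subset hq)
      refine ⟨q, hsubQ1.subset hq, ?_⟩
      simp only [Function.comp, hψ1, dd, cshift]
      split_ifs <;> exact dist_congr u v (by omega) (by omega)

end DFAux




/-- The closed discrete Fréchet distance equals the min-max over wrap-around monotone
paths in the doubled diagram. -/
theorem dcF_eq_minmax_paths {M : Type*} [MetricSpace M]
    (m n : ℕ) (hm : 1 ≤ m) (hn : 1 ≤ n) (u v : ℕ → M) :
    dcF m n u v = dcFpath m n (dd m u v) := by
  have hAne : ∀ s t : ℕ, {x | ∃ L, IsCoupling m n L ∧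
      couplingLength (fun a b => dist (cshift m u s a) (cshift n v t b)) L = x}.Nonempty := by
    intro s t
    obtain ⟨L, hL⟩ := DFAux.coupling_exists m n hm hn
    exact ⟨_, L, hL, rfl⟩
  have hA0 : ∀ (s t : ℕ) (x : ℝ), (∃ L, IsCoupling m n L ∧
      couplingLength (fun a b => dist (cshift m u s a) (cshift n v t b)) L = x) → 0 ≤ x := by
    rintro s t x ⟨L, hL, rfl⟩
    exact DFAux.fm_nonneg _
  have hPS0 : ∀ x : ℝ, (∃ i, 1 ≤ i ∧ i ≤ m ∧ ∃ L, MonoPath m n i i L ∧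
      pathVal (dd m u v) L = x) → 0 ≤ x := by
    rintro x ⟨i, hi1, hi2, L, hL, rfl⟩
    exact DFAux.fm_nonneg _
  have hdF0 : ∀ s t : ℕ, 0 ≤ dF m n (fun a b => dist (cshift m u s a) (cshift n v t b)) :=
    fun s t => le_csInf (hAne s t) (fun x hx => hA0 s t x hx)
  rw [dcF, dcFpath]
  apply le_antisymm
  · apply le_csInf
    · obtain ⟨L, hL⟩ := DFAux.coupling_exists m n hm hn
      obtain ⟨i, hi1, hi2, P, hMP, _⟩ :=
        DFAux.coupling_to_path m n hm hn u v (s := 0) (t := 0) hm hn hL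
      exact ⟨_, i, hi1, hi2, P, hMP, rfl⟩
    · rintro x ⟨i, hi1, hi2, P, hMP, rfl⟩
      obtain ⟨s, hs, t, ht, C, hC, hle⟩ := DFAux.path_to_coupling m n hm hn u v hi1 hi2 hMP
      have h1 : sInf {x | ∃ s < m, ∃ t < n,
          dF m n (fun i j => dist (cshift m u s i) (cshift n v t j)) = x} ≤
          dF m n (fun a b => dist (cshift m u s a) (cshift n v t b)) := by
        apply csInf_le
        · refine ⟨0, ?_⟩
          rintro y ⟨s', hs', t', ht', rfl⟩
          exact hdF0 s' t'
        · exact ⟨s, hs, t, ht, rfl⟩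
      have h2 : dF m n (fun a b => dist (cshift m u s a) (cshift n v t b)) ≤
          couplingLength (fun a b => dist (cshift m u s a) (cshift n v t b)) C := by
        apply csInf_le
        · exact ⟨0, fun y hy => hA0 s t y hy⟩
        · exact ⟨C, hC, rfl⟩
      exact h1.trans (h2.trans hle)
  · apply le_csInf
    · exact ⟨_, 0, hm, 0, hn, rfl⟩
    · rintro x ⟨s, hs, t, ht, rfl⟩
      rw [dF]
      apply le_csInf (hAne s t)
      rintro y ⟨C, hC, rfl⟩
      obtain ⟨i, hi1, hi2, P, hMP, hle⟩ := DFAux.coupling_to_path m n hm hn u v hs ht hC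
      have h1 : sInf {x | ∃ i, 1 ≤ i ∧ i ≤ m ∧ ∃ L, MonoPath m n i i L ∧
          pathVal (dd m u v) L = x} ≤ pathVal (dd m u v) P := by
        apply csInf_le
        · exact ⟨0, fun z hz => hPS0 z hz⟩
        · exact ⟨i, hi1, hi2, P, hMP, rfl⟩
      exact h1.trans hle
end
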